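/- arXiv:1805.11297 — 12 statements merged into one kernel-verified Lean document; each statement's English description precedes it below -/
import Mathlib

section
/- If the execution lengths are chosen optimally, i.e., ℓ_j = w_j·((α-1)/Σ_{k=j}^n p_k)^(1/α), then the value A = Σ_j w_j^α ℓ_j^(1-α) + Σ_j p_j Σ_{k≤j} ℓ_k equals α(α-1)^{(1-α)/α} · Σ_{j=1}^n w_j (Σ_{k=j}^n p_k)^{(α-1)/α}. -/
open Real Finset

theorem stmt4 (n : ℕ) (α : ℝ) (hα : 1 < α) (w p : Fin n → ℝ)
    (hw : ∀ j, 0 < w j) (hp : ∀ j, 0 < p j)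
    (ℓ : Fin n → ℝ)
    (hℓ : ∀ j, ℓ j = w j * ((α - 1) / ∑ k ∈ Finset.Ici j, p k) ^ (1/α)) :
    ∑ j, (w j) ^ α * (ℓ j) ^ (1 - α) + ∑ j, p j * ∑ k ∈ Finset.Iic j, ℓ k
      = α * (α - 1) ^ ((1 - α)/α) * ∑ j, w j * (∑ k ∈ Finset.Ici j, p k) ^ ((α - 1)/α) := by
  have hα0 : (0:ℝ) < α := lt_trans one_pos hα
  have hα1 : (0:ℝ) < α - 1 := sub_pos.mpr hα
  have hP : ∀ j : Fin n, 0 < ∑ k ∈ Finset.Ici j, p k := fun j =>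
    Finset.sum_pos (fun k _ => hp k) ⟨j, Finset.mem_Ici.mpr le_rfl⟩
  -- energy term
  have hE : ∀ j : Fin n, (w j) ^ α * (ℓ j) ^ (1 - α)
      = (α - 1) ^ ((1 - α)/α) * (w j * (∑ k ∈ Finset.Ici j, p k) ^ ((α - 1)/α)) := by
    intro j
    set P := ∑ k ∈ Finset.Ici j, p k with hPdef
    have hPj : (0:ℝ) < P := hP j
    have hc : (0:ℝ) ≤ (α-1)/P := by positivity
    rw [hℓ j, Real.mul_rpow (hw j).le (Real.rpow_nonneg hc _),
        ← Real.rpow_mul hc]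
    have h1 : 1/α * (1-α) = (1-α)/α := by ring
    rw [h1, Real.div_rpow hα1.le hPj.le]
    have h2 : P ^ ((1-α)/α) = (P ^ ((α-1)/α))⁻¹ := by
      rw [← Real.rpow_neg hPj.le]; ring_nf
    have h3 : (w j) ^ α * (w j) ^ (1-α) = w j := by
      rw [← Real.rpow_add (hw j)]; norm_num
    rw [h2]
    field_simp [(Real.rpow_pos_of_pos hPj ((α-1)/α)).ne']
    exact h3
  -- flow term
  have hF : ∑ j, p j * ∑ k ∈ Finset.Iic j, ℓ k
      = (α - 1) ^ (1/α) * ∑ j, w j * (∑ k ∈ Finset.Ici j, p k) ^ ((α - 1)/α) := by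
    have swap : ∑ j, p j * ∑ k ∈ Finset.Iic j, ℓ k
        = ∑ k, (∑ j ∈ Finset.Ici k, p j) * ℓ k := by
      simp_rw [Finset.mul_sum, Finset.sum_mul]
      rw [Finset.sum_sigma', Finset.sum_sigma']
      apply Finset.sum_nbij' (fun x => ⟨x.2, x.1⟩) (fun x => ⟨x.2, x.1⟩) <;>
        simp [Finset.mem_sigma, Finset.mem_Iic, Finset.mem_Ici]
    rw [swap, Finset.mul_sum]
    refine Finset.sum_congr rfl fun k _ => ?_
    set P := ∑ j ∈ Finset.Ici k, p j with hPdef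
    have hPk : (0:ℝ) < P := hP k
    rw [hℓ k, Real.div_rpow hα1.le hPk.le]
    have h4 : P * (P ^ (1/α))⁻¹ = P ^ ((α-1)/α) := by
      rw [← Real.rpow_neg hPk.le]
      nth_rewrite 1 [← Real.rpow_one P]
      rw [← Real.rpow_add hPk]
      congr 1; field_simp; ring
    rw [div_eq_mul_inv]
    calc P * (w k * ((α-1) ^ (1/α) * (P ^ (1/α))⁻¹))
        = (α-1) ^ (1/α) * (w k * (P * (P ^ (1/α))⁻¹)) := by ring
      _ = (α-1) ^ (1/α) * (w k * P ^ ((α-1)/α)) := by rw [h4]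
  rw [Finset.sum_congr rfl (fun j _ => hE j), ← Finset.mul_sum, hF]
  have key : (α - 1) ^ (1/α) = (α - 1) * (α - 1) ^ ((1 - α)/α) := by
    nth_rewrite 2 [← Real.rpow_one (α-1)]
    rw [← Real.rpow_add hα1]
    congr 1; field_simp; ring
  rw [key]; ring
end

section
/- Minimizing over all positive ℓ, min_ℓ A_{w,p}(π,ℓ) = α(α-1)^((1-α)/α) · B_{w,p}(σ), where σ is the reverse order of π, B_{w,p}(σ) = Σ_j w_j C_j^{(α-1)/α}, and C_j under σ is the sum of p_i over jobs i with σ(i) ≤ σ(j). -/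
open Real Finset

lemma eq_of_log_eq {a b : ℝ} (ha : 0 < a) (hb : 0 < b) (h : Real.log a = Real.log b) :
    a = b := by
  rw [← Real.exp_log ha, ← Real.exp_log hb, h]

/-- Per-coordinate lower bound (weighted AM–GM / Young). -/
lemma aux_lb (α : ℝ) (hα : 1 < α) {w C x : ℝ} (hw : 0 < w) (hC : 0 < C) (hx : 0 < x) :
    α * (α - 1) ^ ((1 - α)/α) * (w * C ^ ((α - 1)/α)) ≤ w ^ α * x ^ (1 - α) + C * x := by
  have hα0 : (0:ℝ) < α := by linarith
  have hα1 : (0:ℝ) < α - 1 := by linarith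
  have h1 : (0:ℝ) < w ^ α * x ^ (1 - α) :=
    mul_pos (rpow_pos_of_pos hw α) (rpow_pos_of_pos hx (1-α))
  have h2 : (0:ℝ) < C * x := mul_pos hC hx
  have key := Real.geom_mean_le_arith_mean2_weighted
    (w₁ := 1/α) (w₂ := (α-1)/α)
    (p₁ := α * (w ^ α * x ^ (1-α))) (p₂ := (α/(α-1)) * (C * x))
    (by positivity) (by positivity) (by positivity) (by positivity)
    (by field_simp; ring)
  have hr : (1/α) * (α * (w ^ α * x ^ (1-α))) + ((α-1)/α) * ((α/(α-1)) * (C * x))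
      = w ^ α * x ^ (1 - α) + C * x := by
    field_simp
  rw [hr] at key
  refine le_trans (le_of_eq ?_) key
  refine eq_of_log_eq (by positivity) (by positivity) ?_
  have hd : (0:ℝ) < α / (α - 1) := div_pos hα0 hα1
  have hRhs : Real.log ((α * (w ^ α * x ^ (1-α))) ^ (1/α) * ((α/(α-1)) * (C * x)) ^ ((α-1)/α))
      = (1/α) * Real.log (α * (w ^ α * x ^ (1-α)))
        + ((α-1)/α) * Real.log ((α/(α-1)) * (C * x)) := by
    rw [Real.log_mul (by positivity) (by positivity),
        Real.log_rpow (by positivity), Real.log_rpow (by positivity)]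
  rw [hRhs]
  simp [Real.log_mul, Real.log_rpow, Real.log_div, ne_eq, mul_ne_zero_iff,
    hα0.ne', hα1.ne', hw.ne', hC.ne', hx.ne', h1.ne', h2.ne', hd.ne',
    (mul_pos hα0 h1).ne', (mul_pos hd h2).ne',
    hα0, hα1, hw, hC, hx, h1, h2, hd, mul_pos hα0 h1, mul_pos hd h2,
    (rpow_pos_of_pos hw α).ne', (rpow_pos_of_pos hx (1-α)).ne',
    (rpow_pos_of_pos hα1 ((1-α)/α)).ne', (rpow_pos_of_pos hC ((α-1)/α)).ne',
    rpow_pos_of_pos hw α, rpow_pos_of_pos hx (1-α),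
    rpow_pos_of_pos hα1 ((1-α)/α), rpow_pos_of_pos hC ((α-1)/α),
    not_false_iff]
  field_simp
  ring

/-- Per-coordinate equality at the optimal length. -/
lemma aux_eq (α : ℝ) (hα : 1 < α) {w C : ℝ} (hw : 0 < w) (hC : 0 < C) :
    w ^ α * ((α - 1) ^ (1/α) * w * C ^ (-(1/α))) ^ (1 - α)
      + C * ((α - 1) ^ (1/α) * w * C ^ (-(1/α)))
      = α * (α - 1) ^ ((1 - α)/α) * (w * C ^ ((α - 1)/α)) := by
  have hα0 : (0:ℝ) < α := by linarith
  have hα1 : (0:ℝ) < α - 1 := by linarith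
  have hx : (0:ℝ) < (α - 1) ^ (1/α) * w * C ^ (-(1/α)) := by positivity
  have l1 : ∀ a b : ℝ, 0 < a → 0 < b → Real.log (a * b) = Real.log a + Real.log b :=
    fun a b ha hb => Real.log_mul ha.ne' hb.ne'
  have t1 : w ^ α * ((α - 1) ^ (1/α) * w * C ^ (-(1/α))) ^ (1 - α)
      = (α - 1) ^ ((1 - α)/α) * (w * C ^ ((α - 1)/α)) := by
    refine eq_of_log_eq (by positivity) (by positivity) ?_
    rw [l1 _ _ (by positivity) (by positivity), Real.log_rpow hw,
        Real.log_rpow hx, l1 _ _ (by positivity) (by positivity),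
        l1 _ _ (by positivity) (by positivity),
        Real.log_rpow hα1, Real.log_rpow hC,
        l1 _ _ (by positivity) (by positivity),
        l1 _ _ (by positivity) (by positivity),
        Real.log_rpow hα1, Real.log_rpow hC]
    field_simp
    ring
  have t2 : C * ((α - 1) ^ (1/α) * w * C ^ (-(1/α)))
      = (α - 1) * ((α - 1) ^ ((1 - α)/α) * (w * C ^ ((α - 1)/α))) := by
    refine eq_of_log_eq (by positivity) (by positivity) ?_
    rw [l1 _ _ (by positivity) (by positivity),
        l1 _ _ (by positivity) (by positivity),
        l1 _ _ (by positivity) (by positivity),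
        Real.log_rpow hα1, Real.log_rpow hC,
        l1 _ _ (by positivity) (by positivity),
        l1 _ _ (by positivity) (by positivity),
        l1 _ _ (by positivity) (by positivity),
        Real.log_rpow hα1, Real.log_rpow hC]
    field_simp
    ring
  rw [t1, t2]; ring

/-- Theorem 1 of the paper: for a fixed order `π`, the minimum over positive
length vectors of `A_{w,p}(ord,ℓ)` equals `α(α-1)^((1-α)/α) · B_{w,p}(σ)` where
`σ` is the reverse of `π`. Under `σ`, the completion time of job `j` is
`C j = ∑_{i : ord i ≥ ord j} p i`. -/
theorem stmt5 (n : ℕ) (α : ℝ) (hα : 1 < α) (w p : Fin n → ℝ)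
    (hw : ∀ j, 0 < w j) (hp : ∀ j, 0 < p j)
    (ord : Equiv.Perm (Fin n))
    (A : (Fin n → ℝ) → ℝ)
    (hA : A = fun ℓ => ∑ j, (w j) ^ α * (ℓ j) ^ (1 - α)
        + ∑ j, p j * ∑ i ∈ Finset.univ.filter (fun i => ord i ≤ ord j), ℓ i)
    (C : Fin n → ℝ)
    (hC : ∀ j, C j = ∑ i ∈ Finset.univ.filter (fun i => ord j ≤ ord i), p i)
    (B : ℝ) (hB : B = ∑ j, w j * (C j) ^ ((α - 1)/α)) :
    IsLeast (A '' {ℓ : Fin n → ℝ | ∀ j, 0 < ℓ j})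
      (α * (α - 1) ^ ((1 - α)/α) * B) := by
  have hCpos : ∀ j, 0 < C j := by
    intro j
    rw [hC j]
    refine Finset.sum_pos (fun i _ => hp i) ⟨j, by simp⟩
  -- rearranged form of A
  have hA' : ∀ ℓ : Fin n → ℝ,
      A ℓ = ∑ j, ((w j) ^ α * (ℓ j) ^ (1 - α) + C j * ℓ j) := by
    intro ℓ
    rw [hA]
    simp only
    rw [Finset.sum_add_distrib]
    congr 1
    have swap : ∑ j, p j * ∑ i ∈ Finset.univ.filter (fun i => ord i ≤ ord j), ℓ i
        = ∑ i, ∑ j ∈ Finset.univ.filter (fun j => ord i ≤ ord j), p j * ℓ i := by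
      simp_rw [Finset.mul_sum]
      exact Finset.sum_comm' (fun x y => by simp)
    rw [swap]
    refine Finset.sum_congr rfl fun i _ => ?_
    rw [← Finset.sum_mul, ← hC i]
  have hBform : α * (α - 1) ^ ((1 - α)/α) * B
      = ∑ j, α * (α - 1) ^ ((1 - α)/α) * (w j * (C j) ^ ((α - 1)/α)) := by
    rw [hB, Finset.mul_sum]
  constructor
  · -- membership: optimal lengths
    refine ⟨fun j => (α - 1) ^ (1/α) * w j * (C j) ^ (-(1/α)), ?_, ?_⟩
    · intro j
      have := hw j; have := hCpos j
      have hα1 : (0:ℝ) < α - 1 := by linarith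
      positivity
    · rw [hA', hBform]
      refine Finset.sum_congr rfl fun j _ => ?_
      exact aux_eq α hα (hw j) (hCpos j)
  · rintro y ⟨ℓ, hℓ, rfl⟩
    rw [hA', hBform]
    exact Finset.sum_le_sum fun j _ => aux_lb α hα (hw j) (hCpos j) (hℓ j)
end

section
/- At the optimal lengths, the energy of job j satisfies s_j^α ℓ_j = (w_j/(α-1)^{1-1/α})·(Σ_{k=j}^n p_k)^{1-1/α}, and consequently ∂(s_k^α ℓ_k)/∂p_i = ℓ_k/α for every k ≤ i (where indices refer to the processing order). -/
open Real Finset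

lemma energy_eq (α w S : ℝ) (hα : 1 < α) (hw : 0 < w) (hS : 0 < S) :
    (w / (w * ((α - 1) / S) ^ (1/α))) ^ α * (w * ((α - 1) / S) ^ (1/α))
      = w / (α - 1) ^ (1 - 1/α) * S ^ (1 - 1/α) := by
  have hA : (0:ℝ) < α - 1 := by linarith
  have hα0 : α ≠ 0 := by positivity
  have hAS : (0:ℝ) < (α - 1) / S := div_pos hA hS
  have hr : (0:ℝ) < ((α - 1) / S) ^ (1/α) := rpow_pos_of_pos hAS _
  have h1 : w / (w * ((α - 1) / S) ^ (1/α)) = (((α - 1) / S) ^ (1/α))⁻¹ := by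
    field_simp
  have h2 : ((((α - 1) / S) ^ (1/α))⁻¹) ^ α = ((α - 1) / S)⁻¹ := by
    rw [Real.inv_rpow hr.le, ← Real.rpow_mul hAS.le,
      one_div_mul_cancel hα0, Real.rpow_one]
  have hApow : (α - 1) ^ (1 - 1/α) = (α - 1) / (α - 1) ^ (1/α) := by
    rw [Real.rpow_sub hA, Real.rpow_one]
  have hSpow : S ^ (1 - 1/α) = S / S ^ (1/α) := by
    rw [Real.rpow_sub hS, Real.rpow_one]
  have hdiv : ((α - 1) / S) ^ (1/α) = (α - 1) ^ (1/α) / S ^ (1/α) :=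
    Real.div_rpow hA.le hS.le _
  have hA1 : (0:ℝ) < (α - 1) ^ (1/α) := rpow_pos_of_pos hA _
  have hS1 : (0:ℝ) < S ^ (1/α) := rpow_pos_of_pos hS _
  rw [h1, Real.inv_rpow hr.le, ← Real.rpow_mul hAS.le, one_div_mul_cancel hα0,
    Real.rpow_one, hApow, hSpow, hdiv]
  field_simp

/-- At the optimal lengths, the energy of job `k` is
`s_k^α ℓ_k = (w_k/(α-1)^(1-1/α))·(∑_{j≥k} p_j)^(1-1/α)`, and for every `k ≤ i`
its derivative with respect to the penalty `p_i` of player `i` equals `ℓ_k/α`. -/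
theorem stmt6 (n : ℕ) (α : ℝ) (hα : 1 < α) (w p : Fin n → ℝ)
    (hw : ∀ j, 0 < w j) (hp : ∀ j, 0 < p j)
    (ℓ : (Fin n → ℝ) → Fin n → ℝ)
    (hℓ : ∀ q k, ℓ q k = w k * ((α - 1) / ∑ j ∈ Finset.Ici k, q j) ^ (1/α))
    (s : (Fin n → ℝ) → Fin n → ℝ)
    (hs : ∀ q k, s q k = w k / ℓ q k)
    (i k : Fin n) (hk : k ≤ i) :
    (s p k) ^ α * ℓ p k
        = w k / (α - 1) ^ (1 - 1/α) * (∑ j ∈ Finset.Ici k, p j) ^ (1 - 1/α)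
    ∧ HasDerivAt (fun t => (s (Function.update p i t) k) ^ α * ℓ (Function.update p i t) k)
        (ℓ p k / α) (p i) := by
  have hA : (0:ℝ) < α - 1 := by linarith
  have hα0 : α ≠ 0 := by positivity
  have hi : i ∈ Finset.Ici k := Finset.mem_Ici.2 hk
  set C : ℝ := ∑ j ∈ Finset.Ici k \ {i}, p j with hCdef
  have hC0 : 0 ≤ C := Finset.sum_nonneg fun j _ => (hp j).le
  have hSsum : ∀ t : ℝ, (∑ j ∈ Finset.Ici k, Function.update p i t j) = t + C := by
    intro t
    rw [Finset.sum_update_of_mem hi]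
  have hS₀ : (∑ j ∈ Finset.Ici k, p j) = p i + C := by
    rw [← Finset.sum_update_of_mem hi, Function.update_eq_self]
  have hS₀pos : (0:ℝ) < ∑ j ∈ Finset.Ici k, p j :=
    Finset.sum_pos (fun j _ => hp j) ⟨k, Finset.mem_Ici.2 le_rfl⟩
  have hpiC : (0:ℝ) < p i + C := hS₀ ▸ hS₀pos
  constructor
  · rw [hs, hℓ]
    exact energy_eq α (w k) _ hα (hw k) hS₀pos
  · -- derivative
    have hg : HasDerivAt (fun t : ℝ => w k / (α - 1) ^ (1 - 1/α) * (t + C) ^ (1 - 1/α))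
        (ℓ p k / α) (p i) := by
      have h1 : HasDerivAt (fun t : ℝ => t + C) 1 (p i) := (hasDerivAt_id _).add_const C
      have h2 := h1.rpow_const (p := 1 - 1/α) (Or.inl (ne_of_gt hpiC))
      have h3 := h2.const_mul (w k / (α - 1) ^ (1 - 1/α))
      convert h3 using 1
      · rfl
      · rfl
      rw [hℓ, hS₀]
      have hA1 : (0:ℝ) < (α - 1) ^ (1/α) := rpow_pos_of_pos hA _
      have hS1 : (0:ℝ) < (p i + C) ^ (1/α) := rpow_pos_of_pos hpiC _
      have hApow : (α - 1) ^ (1 - 1/α) = (α - 1) / (α - 1) ^ (1/α) := by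
        rw [Real.rpow_sub hA, Real.rpow_one]
      have hSpow : (p i + C) ^ (1 - 1/α - 1) = ((p i + C) ^ (1/α))⁻¹ := by
        rw [show (1 - 1/α - 1 : ℝ) = -(1/α) by ring]
        exact Real.rpow_neg hpiC.le (1/α)
      have hdiv : ((α - 1) / (p i + C)) ^ (1/α) = (α - 1) ^ (1/α) / (p i + C) ^ (1/α) :=
        Real.div_rpow hA.le hpiC.le _
      rw [hdiv, hSpow, hApow]
      field_simp
    apply hg.congr_of_eventuallyEq
    have hev : ∀ᶠ t in nhds (p i), -C < t :=
      eventually_gt_nhds (by linarith [hp i])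
    filter_upwards [hev] with t ht
    have hpos : (0:ℝ) < t + C := by linarith
    rw [hs, hℓ, hSsum t, energy_eq α (w k) (t + C) hα (hw k) hpos]
end

section
/- In the cost-share mechanism, the partial derivative of player i's total penalty (p_i − p̂_i)·Σ_{k=1}^i ℓ_k + α(OPT_π(p̂) − OPT_π(p̂_{−i})) with respect to the announced penalty p̂_i equals (p_i − p̂_i)·Σ_{k=1}^i ∂ℓ_k/∂p̂_i, and since each ∂ℓ_k/∂p̂_i < 0, the penalty is uniquely minimized at p̂_i = p_i (the mechanism is truthful). -/
open Real Finset

/-- Truthfulness of the mechanism: the derivative of player `i`'s total penalty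
with respect to his announced penalty `t = p̂_i` equals
`(p_i − p̂_i)·∑_{k≤i} ∂ℓ_k/∂p̂_i`, each `∂ℓ_k/∂p̂_i < 0`, and hence the penalty
is uniquely minimized at the truthful announcement `p̂_i = p_i`. -/
theorem stmt8 (n : ℕ) (α : ℝ) (hα : 1 < α) (w p : Fin n → ℝ)
    (hw : ∀ j, 0 < w j) (hp : ∀ j, 0 < p j) (i : Fin n)
    (q : ℝ → Fin n → ℝ) (hq : ∀ t, q t = Function.update p i t)
    (ℓ : (Fin n → ℝ) → Fin n → ℝ)
    (hℓ : ∀ r k, ℓ r k = w k * ((α - 1) / ∑ j ∈ Finset.Ici k, r j) ^ (1/α))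
    (OPT : (Fin n → ℝ) → ℝ)
    (hOPT : ∀ r, OPT r = ∑ k, (w k) ^ α * (ℓ r k) ^ (1 - α))
    (OPTminus : ℝ)
    (hOPTminus : OPTminus = ∑ k ∈ Finset.univ.erase i,
        (w k) ^ α * (w k * ((α - 1) / ∑ j ∈ (Finset.Ici k).erase i, p j) ^ (1/α)) ^ (1 - α))
    (Φ : ℝ → ℝ)
    (hΦ : ∀ t, Φ t = (p i - t) * (∑ k ∈ Finset.Iic i, ℓ (q t) k)
        + α * (OPT (q t) - OPTminus))
    (dℓ : Fin n → ℝ → ℝ)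
    (hdℓ : ∀ k t, dℓ k t
        = -(w k * (α - 1) ^ (1/α) / α) * (∑ j ∈ Finset.Ici k, q t j) ^ (-(1/α) - 1)) :
    (∀ t > (0 : ℝ), HasDerivAt Φ ((p i - t) * ∑ k ∈ Finset.Iic i, dℓ k t) t)
    ∧ (∀ t > (0 : ℝ), ∀ k ≤ i, dℓ k t < 0)
    ∧ (∀ t > (0 : ℝ), t ≠ p i → Φ (p i) < Φ t) := by
  have hα0 : (0 : ℝ) < α := lt_trans one_pos hα
  have hα1 : (0 : ℝ) < α - 1 := sub_pos.mpr hα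
  set c : Fin n → ℝ := fun k => ∑ j ∈ (Finset.Ici k).erase i, p j with hc
  have hc0 : ∀ k, 0 ≤ c k := fun k => Finset.sum_nonneg fun j _ => (hp j).le
  -- sum rewriting
  have hsum_le : ∀ (t : ℝ) (k : Fin n), k ≤ i → ∑ j ∈ Finset.Ici k, q t j = t + c k := by
    intro t k hk
    rw [hq, Finset.sum_update_of_mem (Finset.mem_Ici.mpr hk), hc,
      Finset.sdiff_singleton_eq_erase]
  have hsum_gt : ∀ (t : ℝ) (k : Fin n), ¬ k ≤ i →
      ∑ j ∈ Finset.Ici k, q t j = ∑ j ∈ Finset.Ici k, p j := by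
    intro t k hk
    rw [hq]
    refine Finset.sum_congr rfl fun j hj => ?_
    refine Function.update_of_ne (fun h => hk ?_) _ _
    rw [← h]; exact Finset.mem_Ici.mp hj
  -- nice formula for ℓ
  have hℓform : ∀ t > (0:ℝ), ∀ k, k ≤ i →
      ℓ (q t) k = w k * (α - 1) ^ (1/α) * (t + c k) ^ (-(1/α)) := by
    intro t ht k hk
    have hS : 0 < t + c k := by linarith [hc0 k]
    rw [hℓ, hsum_le t k hk, Real.div_rpow hα1.le hS.le, Real.rpow_neg hS.le,
      div_eq_mul_inv, mul_assoc]
  have hℓpos : ∀ t > (0:ℝ), ∀ k, k ≤ i → 0 < ℓ (q t) k := by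
    intro t ht k hk
    rw [hℓform t ht k hk]
    have hS : 0 < t + c k := by linarith [hc0 k]
    exact mul_pos (mul_pos (hw k) (Real.rpow_pos_of_pos hα1 _)) (Real.rpow_pos_of_pos hS _)
  -- the sum L has derivative
  have hD : ∀ t > (0:ℝ), HasDerivAt (fun s => ∑ k ∈ Finset.Iic i, ℓ (q s) k)
      (∑ k ∈ Finset.Iic i, dℓ k t) t := by
    intro t ht
    refine HasDerivAt.fun_sum fun k hk => ?_
    have hk' : k ≤ i := Finset.mem_Iic.mp hk
    have hS : 0 < t + c k := by linarith [hc0 k]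
    have h1 : HasDerivAt (fun s : ℝ => s + c k) 1 t := (hasDerivAt_id t).add_const _
    have h2 := (h1.rpow_const (p := -(1/α)) (Or.inl hS.ne')).const_mul (w k * (α - 1) ^ (1/α))
    have heq : (fun s => ℓ (q s) k)
        =ᶠ[nhds t] fun s => w k * (α - 1) ^ (1/α) * (s + c k) ^ (-(1/α)) := by
      filter_upwards [eventually_gt_nhds ht] with s hs
      exact hℓform s hs k hk'
    refine HasDerivAt.congr_of_eventuallyEq ?_ heq
    refine h2.congr_deriv (Eq.symm ?_)
    rw [hdℓ k t, hsum_le t k hk']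
    ring
  -- nice formula for OPT summand
  have hterm : ∀ t > (0:ℝ), ∀ k, k ≤ i →
      w k ^ α * (ℓ (q t) k) ^ (1 - α)
        = w k * (α - 1) ^ (1/α - 1) * (t + c k) ^ (1 - 1/α) := by
    intro t ht k hk
    have hS : 0 < t + c k := by linarith [hc0 k]
    rw [hℓform t ht k hk]
    have hA1 : (0:ℝ) ≤ (α - 1) ^ (1/α) := (Real.rpow_pos_of_pos hα1 _).le
    have hS1 : (0:ℝ) ≤ (t + c k) ^ (-(1/α)) := (Real.rpow_pos_of_pos hS _).le
    rw [Real.mul_rpow (mul_nonneg (hw k).le hA1) hS1,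
        Real.mul_rpow (hw k).le hA1,
        ← Real.rpow_mul hα1.le, ← Real.rpow_mul hS.le]
    have hww : w k ^ α * w k ^ (1 - α) = w k := by
      rw [← Real.rpow_add (hw k)]; norm_num
    have he1 : (1/α) * (1 - α) = 1/α - 1 := by field_simp
    have he2 : (-(1/α)) * (1 - α) = 1 - 1/α := by field_simp; ring
    rw [he1, he2]
    linear_combination ((α - 1) ^ (1/α - 1) * (t + c k) ^ (1 - 1/α)) * hww
  -- derivative of OPT ∘ q
  have hO : ∀ t > (0:ℝ), HasDerivAt (fun s => OPT (q s))
      ((∑ k ∈ Finset.Iic i, ℓ (q t) k) / α) t := by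
    intro t ht
    have key : ∀ k : Fin n, HasDerivAt (fun s => w k ^ α * (ℓ (q s) k) ^ (1 - α))
        (if k ≤ i then ℓ (q t) k / α else 0) t := by
      intro k
      by_cases hk : k ≤ i
      · have hS : 0 < t + c k := by linarith [hc0 k]
        have h1 : HasDerivAt (fun s : ℝ => s + c k) 1 t := (hasDerivAt_id t).add_const _
        have h2 := (h1.rpow_const (p := 1 - 1/α) (Or.inl hS.ne')).const_mul (w k * (α - 1) ^ (1/α - 1))
        have heq : (fun s => w k ^ α * (ℓ (q s) k) ^ (1 - α))
            =ᶠ[nhds t] fun s => w k * (α - 1) ^ (1/α - 1) * (s + c k) ^ (1 - 1/α) := by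
          filter_upwards [eventually_gt_nhds ht] with s hs
          exact hterm s hs k hk
        refine HasDerivAt.congr_of_eventuallyEq ?_ heq
        rw [if_pos hk]
        refine h2.congr_deriv (Eq.symm ?_)
        have hexp : (1 : ℝ) - 1/α - 1 = -(1/α) := by ring
        have hA : (α - 1) ^ (1/α) = (α - 1) ^ (1/α - 1) * (α - 1) := by
          nth_rewrite 3 [← Real.rpow_one (α - 1)]
          rw [← Real.rpow_add hα1]; norm_num
        rw [hℓform t ht k hk, hexp, hA]
        field_simp
      · refine HasDerivAt.congr_of_eventuallyEq ?_
          (Filter.Eventually.of_forall (fun s => ?_) :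
            (fun s => w k ^ α * (ℓ (q s) k) ^ (1 - α))
              =ᶠ[nhds t] fun _ => w k ^ α * (ℓ p k) ^ (1 - α))
        · rw [if_neg hk]; exact hasDerivAt_const _ _
        · simp only [hℓ]; rw [hsum_gt s k hk]
      -- done
    have := HasDerivAt.fun_sum (u := Finset.univ) (A' := fun k => if k ≤ i then ℓ (q t) k / α else 0)
      (fun k _ => key k)
    have hfun : (fun s => OPT (q s)) = fun s => ∑ k, w k ^ α * (ℓ (q s) k) ^ (1 - α) := by
      funext s; rw [hOPT]
    rw [hfun]
    refine this.congr_deriv (Eq.symm ?_)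
    rw [Finset.sum_div,
      show Finset.Iic i = Finset.univ.filter (fun k => k ≤ i) from by ext k; simp,
      Finset.sum_filter]
  -- claim 1
  have claim1 : ∀ t > (0:ℝ), HasDerivAt Φ ((p i - t) * ∑ k ∈ Finset.Iic i, dℓ k t) t := by
    intro t ht
    have hΦfun : Φ = fun s => (p i - s) * (∑ k ∈ Finset.Iic i, ℓ (q s) k)
        + α * (OPT (q s) - OPTminus) := funext hΦ
    rw [hΦfun]
    have h1 : HasDerivAt (fun s : ℝ => p i - s) (-1) t := by
      simpa using (hasDerivAt_id t).const_sub (p i)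
    have h2 := (h1.mul (hD t ht)).add (((hO t ht).sub_const OPTminus).const_mul α)
    refine h2.congr_deriv (Eq.symm ?_)
    field_simp
    ring
  refine ⟨claim1, ?_, ?_⟩
  · intro t ht k hk
    rw [hdℓ k t, hsum_le t k hk]
    have hS : 0 < t + c k := by linarith [hc0 k]
    have h1 : 0 < w k * (α - 1) ^ (1/α) / α := div_pos (mul_pos (hw k) (Real.rpow_pos_of_pos hα1 _)) hα0
    have h2 : 0 < (t + c k) ^ (-(1/α) - 1) := Real.rpow_pos_of_pos hS _
    nlinarith
  · -- claim 3
    have hDneg : ∀ t > (0:ℝ), ∑ k ∈ Finset.Iic i, dℓ k t < 0 := by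
      intro t ht
      refine Finset.sum_neg (fun k hk => ?_) ⟨i, Finset.mem_Iic.mpr le_rfl⟩
      have hk' : k ≤ i := Finset.mem_Iic.mp hk
      rw [hdℓ k t, hsum_le t k hk']
      have hS : 0 < t + c k := by linarith [hc0 k]
      have h1 : 0 < w k * (α - 1) ^ (1/α) / α := div_pos (mul_pos (hw k) (Real.rpow_pos_of_pos hα1 _)) hα0
      have h2 : 0 < (t + c k) ^ (-(1/α) - 1) := Real.rpow_pos_of_pos hS _
      nlinarith
    intro t ht hne
    rcases lt_or_gt_of_ne hne with hlt | hgt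
    · -- t < p i : Φ strictly decreasing on [t, p i]
      have := strictAntiOn_of_deriv_neg (convex_Icc t (p i))
        (fun x hx => by
          have hx0 : 0 < x := lt_of_lt_of_le ht hx.1
          exact (claim1 x hx0).differentiableAt.continuousAt.continuousWithinAt)
        (fun x hx => by
          rw [interior_Icc] at hx
          have hx0 : 0 < x := lt_trans ht hx.1
          rw [(claim1 x hx0).deriv]
          have h1 : 0 < p i - x := sub_pos.mpr hx.2
          have h2 := hDneg x hx0
          nlinarith)
      exact this (Set.left_mem_Icc.mpr hlt.le) (Set.right_mem_Icc.mpr hlt.le) hlt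
    · -- p i < t : Φ strictly increasing on [p i, t]
      have := strictMonoOn_of_deriv_pos (convex_Icc (p i) t)
        (fun x hx => by
          have hx0 : 0 < x := lt_of_lt_of_le (hp i) hx.1
          exact (claim1 x hx0).differentiableAt.continuousAt.continuousWithinAt)
        (fun x hx => by
          rw [interior_Icc] at hx
          have hx0 : 0 < x := lt_trans (hp i) hx.1
          rw [(claim1 x hx0).deriv]
          have h1 : p i - x < 0 := sub_neg.mpr hx.1
          have h2 := hDneg x hx0
          nlinarith)
      exact this (Set.left_mem_Icc.mpr hgt.le) (Set.right_mem_Icc.mpr hgt.le) hgt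
end

section
/- With at least 2 players, the cost share b_i = α(OPT_π(p̂) − OPT_π(p̂_{−i})) − p̂_i C_i of each player i is strictly greater than the energy ℓ_i s_i^α consumed by that player's job. -/
open Real Finset

/-- Tangent-line inequality for the strictly concave function `x ↦ x ^ β`, `0 < β < 1`. -/
lemma tangent_lt {β u v : ℝ} (hβ0 : 0 < β) (hβ1 : β < 1) (hv : 0 < v) (huv : v < u) :
    β * u ^ (β - 1) * (u - v) < u ^ β - v ^ β := by
  have hu : 0 < u := hv.trans huv
  have hs : (-1 : ℝ) ≤ v / u - 1 := by
    have : 0 ≤ v / u := by positivity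
    linarith
  have hs' : v / u - 1 ≠ 0 := by
    have : v / u < 1 := (div_lt_one hu).2 huv
    linarith
  have h := rpow_one_add_lt_one_add_mul_self hs hs' hβ0 hβ1
  rw [show (1 : ℝ) + (v / u - 1) = v / u by ring] at h
  have hupow : 0 < u ^ β := Real.rpow_pos_of_pos hu β
  have hdiv : (v / u) ^ β = v ^ β / u ^ β := Real.div_rpow hv.le hu.le β
  rw [hdiv] at h
  have key : v ^ β < u ^ β * (1 + β * (v / u - 1)) := by
    calc v ^ β = u ^ β * (v ^ β / u ^ β) := by field_simp
      _ < _ := mul_lt_mul_of_pos_left h hupow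
  have hub : u ^ (β - 1) = u ^ β / u := by
    rw [Real.rpow_sub hu, Real.rpow_one]
  have hexp : u ^ β * (1 + β * (v / u - 1)) = u ^ β - β * (u ^ β / u) * (u - v) := by
    field_simp; ring
  rw [hexp] at key
  rw [hub]
  linarith

/-- The energy of a job with workload `W` run at the optimal length. -/
lemma energy_eq_s9 {α W U : ℝ} (hα : 1 < α) (hW : 0 < W) (hU : 0 < U) :
    (W * ((α - 1) / U) ^ (1/α)) * (W / (W * ((α - 1) / U) ^ (1/α))) ^ α
      = W * ((α - 1) / U) ^ (1/α - 1) := by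
  have hc : 0 < α - 1 := by linarith
  have hα0 : (0 : ℝ) < α := by linarith
  have hr : 0 < (α - 1) / U := by positivity
  set r := (α - 1) / U with hrdef
  have hrp : 0 < r ^ (1/α) := Real.rpow_pos_of_pos hr _
  have h1 : W / (W * r ^ (1/α)) = r ^ (-(1/α)) := by
    rw [Real.rpow_neg hr.le]
    field_simp
  rw [h1, ← Real.rpow_mul hr.le]
  rw [show -(1/α) * α = -1 by field_simp]
  rw [mul_assoc, ← Real.rpow_add hr]
  rw [show 1/α + -1 = 1/α - 1 by ring]

lemma conv_eq {α U : ℝ} (hα : 1 < α) (hU : 0 < U) :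
    ((α - 1) / U) ^ (1/α - 1) = U ^ ((α - 1)/α) * (α - 1) ^ (-((α - 1)/α)) := by
  have hc : 0 < α - 1 := by linarith
  have hα0 : (0 : ℝ) < α := by linarith
  rw [show 1/α - 1 = -((α - 1)/α) by field_simp; ring]
  rw [Real.rpow_neg (by positivity), ← Real.inv_rpow (by positivity), inv_div,
    Real.div_rpow hU.le hc.le, div_eq_mul_inv, ← Real.rpow_neg hc.le]

lemma ell_conv {α U : ℝ} (hα : 1 < α) (hU : 0 < U) :
    ((α - 1) / U) ^ (1/α) = (α - 1) * U ^ ((α - 1)/α - 1) * (α - 1) ^ (-((α - 1)/α)) := by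
  have hc : 0 < α - 1 := by linarith
  have hα0 : (0 : ℝ) < α := by linarith
  rw [Real.div_rpow hc.le hU.le]
  rw [show (α - 1)/α - 1 = -(1/α) by field_simp; ring]
  rw [Real.rpow_neg hU.le, Real.rpow_neg hc.le]
  have hkey : (α - 1) ^ (1/α) * (α - 1) ^ ((α - 1)/α) = α - 1 := by
    rw [← Real.rpow_add hc, show 1/α + (α - 1)/α = 1 by field_simp; ring, Real.rpow_one]
  have h2 : (0:ℝ) < (α - 1) ^ ((α - 1)/α) := Real.rpow_pos_of_pos hc _
  field_simp
  linarith [hkey]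

/-- Positivity of the terms `k < i` in the decomposition of `b - e_i`. -/
lemma term_lt {α u v q W : ℝ} (hα : 1 < α) (hW : 0 < W) (hv : 0 < v) (hq : 0 < q)
    (huv : u = v + q) :
    0 < α * (W * u ^ ((α - 1)/α) * (α - 1) ^ (-((α - 1)/α))
          - W * v ^ ((α - 1)/α) * (α - 1) ^ (-((α - 1)/α)))
        - q * (W * ((α - 1) * u ^ ((α - 1)/α - 1) * (α - 1) ^ (-((α - 1)/α)))) := by
  have hc : 0 < α - 1 := by linarith
  have hα0 : (0 : ℝ) < α := by linarith
  have hcb : 0 < (α - 1) ^ (-((α - 1)/α)) := Real.rpow_pos_of_pos hc _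
  have hβ0 : 0 < (α - 1)/α := by positivity
  have hβ1 : (α - 1)/α < 1 := by rw [div_lt_one hα0]; linarith
  have hvu : v < u := by rw [huv]; linarith
  have h := tangent_lt hβ0 hβ1 hv hvu
  have hq' : u - v = q := by rw [huv]; ring
  rw [hq'] at h
  have h2 : 0 < (u ^ ((α - 1)/α) - v ^ ((α - 1)/α)) - (α - 1)/α * u ^ ((α - 1)/α - 1) * q := by
    linarith
  have heq : α * (W * u ^ ((α - 1)/α) * (α - 1) ^ (-((α - 1)/α))
          - W * v ^ ((α - 1)/α) * (α - 1) ^ (-((α - 1)/α)))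
        - q * (W * ((α - 1) * u ^ ((α - 1)/α - 1) * (α - 1) ^ (-((α - 1)/α))))
      = W * (α - 1) ^ (-((α - 1)/α)) * α
        * ((u ^ ((α - 1)/α) - v ^ ((α - 1)/α)) - (α - 1)/α * u ^ ((α - 1)/α - 1) * q) := by
    field_simp
  rw [heq]
  exact mul_pos (mul_pos (mul_pos hW hcb) hα0) h2

/-- Rewriting of the `k = i` term. -/
lemma termI_eq {α u R q W : ℝ} (hα : 1 < α) (hu : 0 < u) (huq : u = q + R) :
    (α - 1) * (W * u ^ ((α - 1)/α) * (α - 1) ^ (-((α - 1)/α)))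
        - q * (W * ((α - 1) * u ^ ((α - 1)/α - 1) * (α - 1) ^ (-((α - 1)/α))))
      = (α - 1) * W * (α - 1) ^ (-((α - 1)/α)) * u ^ ((α - 1)/α - 1) * R := by
  have hsplit : u ^ ((α - 1)/α) = u ^ ((α - 1)/α - 1) * u := by
    have h := Real.rpow_add_one hu.ne' ((α - 1)/α - 1)
    rw [sub_add_cancel] at h
    exact h
  rw [hsplit, huq]
  ring

/-- With at least 2 players, the cost share `b_i` of each player `i` strictly
exceeds the energy `ℓ_i s_i^α` consumed by his job. -/
theorem stmt9 (n : ℕ) (hn : 2 ≤ n) (α : ℝ) (hα : 1 < α) (w p : Fin n → ℝ)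
    (hw : ∀ j, 0 < w j) (hp : ∀ j, 0 < p j)
    (ℓ : Fin n → ℝ)
    (hℓ : ∀ k, ℓ k = w k * ((α - 1) / ∑ j ∈ Finset.Ici k, p j) ^ (1/α))
    (s : Fin n → ℝ) (hs : ∀ k, s k = w k / ℓ k)
    (OPT : ℝ) (hOPT : OPT = ∑ k, ℓ k * (s k) ^ α)
    (i : Fin n)
    (ℓ' : Fin n → ℝ)
    (hℓ' : ∀ k, ℓ' k = w k * ((α - 1) / ∑ j ∈ (Finset.Ici k).erase i, p j) ^ (1/α))
    (OPT' : ℝ) (hOPT' : OPT' = ∑ k ∈ Finset.univ.erase i, ℓ' k * (w k / ℓ' k) ^ α)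
    (b : ℝ) (hb : b = α * (OPT - OPT') - p i * ∑ k ∈ Finset.Iic i, ℓ k) :
    b > ℓ i * (s i) ^ α := by
  have hα0 : (0 : ℝ) < α := by linarith
  have hc : 0 < α - 1 := by linarith
  set P : Fin n → ℝ := fun k => ∑ j ∈ Finset.Ici k, p j with hPdef
  set Q : Fin n → ℝ := fun k => ∑ j ∈ (Finset.Ici k).erase i, p j with hQdef
  have hP : ∀ k, 0 < P k := fun k =>
    Finset.sum_pos (fun j _ => hp j) ⟨k, Finset.mem_Ici.2 le_rfl⟩
  have hQP : ∀ k, k ≤ i → Q k + p i = P k := fun k hk =>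
    Finset.sum_erase_add _ _ (Finset.mem_Ici.2 hk)
  have hQpos : ∀ k, k < i → 0 < Q k := fun k hk =>
    Finset.sum_pos (fun j _ => hp j)
      ⟨k, Finset.mem_erase.2 ⟨hk.ne, Finset.mem_Ici.2 le_rfl⟩⟩
  -- energy formulas
  have hE : ∀ k, ℓ k * s k ^ α
      = w k * P k ^ ((α - 1)/α) * (α - 1) ^ (-((α - 1)/α)) := by
    intro k
    rw [hs k, hℓ k, energy_eq_s9 hα (hw k) (hP k), conv_eq hα (hP k)]
    ring
  have hL : ∀ k, ℓ k
      = w k * ((α - 1) * P k ^ ((α - 1)/α - 1) * (α - 1) ^ (-((α - 1)/α))) := by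
    intro k
    rw [hℓ k, ell_conv hα (hP k)]
  have hE' : ∀ k, k < i → ℓ' k * (w k / ℓ' k) ^ α
      = w k * Q k ^ ((α - 1)/α) * (α - 1) ^ (-((α - 1)/α)) := by
    intro k hk
    rw [hℓ' k, energy_eq_s9 hα (hw k) (hQpos k hk), conv_eq hα (hQpos k hk)]
    ring
  have hEQ : ∀ k ∈ Finset.Ioi i, ℓ' k * (w k / ℓ' k) ^ α = ℓ k * s k ^ α := by
    intro k hk
    have hik : ¬ k ≤ i := not_le.2 (Finset.mem_Ioi.1 hk)
    have herase : (Finset.Ici k).erase i = Finset.Ici k :=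
      Finset.erase_eq_of_notMem (fun h => hik (Finset.mem_Ici.1 h))
    have hLk : ℓ' k = ℓ k := by rw [hℓ' k, herase, ← hℓ k]
    rw [hLk, ← hs k]
  -- splitting the sums
  have hUnion : Finset.Iic i ∪ Finset.Ioi i = Finset.univ := by
    ext x
    simp only [Finset.mem_union, Finset.mem_Iic, Finset.mem_Ioi, Finset.mem_univ, iff_true]
    exact le_or_gt x i
  have hDisj : Disjoint (Finset.Iic i) (Finset.Ioi i) := by
    rw [Finset.disjoint_left]
    intro a ha ha'
    exact absurd (Finset.mem_Ioi.1 ha') (not_lt.2 (Finset.mem_Iic.1 ha))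
  have hUnion' : Finset.univ.erase i = Finset.Iio i ∪ Finset.Ioi i := by
    ext x
    simp only [Finset.mem_erase, Finset.mem_univ, and_true, Finset.mem_union,
      Finset.mem_Iio, Finset.mem_Ioi]
    exact ⟨fun h => Ne.lt_or_gt h, fun h => h.elim (fun h' => h'.ne) (fun h' => h'.ne')⟩
  have hDisj' : Disjoint (Finset.Iio i) (Finset.Ioi i) := by
    rw [Finset.disjoint_left]
    intro a ha ha'
    exact absurd (Finset.mem_Ioi.1 ha') (not_lt.2 (Finset.mem_Iio.1 ha).le)
  have hOPTsplit : OPT = ∑ k ∈ Finset.Iic i, ℓ k * s k ^ α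
      + ∑ k ∈ Finset.Ioi i, ℓ k * s k ^ α := by
    rw [hOPT, ← Finset.sum_union hDisj, hUnion]
  have hOPT'split : OPT'
      = ∑ k ∈ Finset.Iio i, w k * Q k ^ ((α - 1)/α) * (α - 1) ^ (-((α - 1)/α))
        + ∑ k ∈ Finset.Ioi i, ℓ k * s k ^ α := by
    rw [hOPT', hUnion', Finset.sum_union hDisj']
    congr 1
    · exact Finset.sum_congr rfl fun k hk => hE' k (Finset.mem_Iio.1 hk)
    · exact Finset.sum_congr rfl hEQ
  have hIicE : ∑ k ∈ Finset.Iic i, ℓ k * s k ^ α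
      = ℓ i * s i ^ α + ∑ k ∈ Finset.Iio i, ℓ k * s k ^ α := by
    rw [← Finset.Iio_insert, Finset.sum_insert (by simp)]
  have hIicL : ∑ k ∈ Finset.Iic i, ℓ k = ℓ i + ∑ k ∈ Finset.Iio i, ℓ k := by
    rw [← Finset.Iio_insert, Finset.sum_insert (by simp)]
  have hsum1 : ∑ k ∈ Finset.Iio i, ℓ k * s k ^ α
      = ∑ k ∈ Finset.Iio i, w k * P k ^ ((α - 1)/α) * (α - 1) ^ (-((α - 1)/α)) :=
    Finset.sum_congr rfl fun k _ => hE k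
  -- the decomposition of b - e_i
  have h1 : ∑ k ∈ Finset.Iio i,
        (α * (w k * P k ^ ((α - 1)/α) * (α - 1) ^ (-((α - 1)/α))
            - w k * Q k ^ ((α - 1)/α) * (α - 1) ^ (-((α - 1)/α))) - p i * ℓ k)
      = α * (∑ k ∈ Finset.Iio i, w k * P k ^ ((α - 1)/α) * (α - 1) ^ (-((α - 1)/α)))
        - α * (∑ k ∈ Finset.Iio i, w k * Q k ^ ((α - 1)/α) * (α - 1) ^ (-((α - 1)/α)))
        - p i * ∑ k ∈ Finset.Iio i, ℓ k := by
    rw [Finset.sum_sub_distrib, ← Finset.mul_sum, ← Finset.mul_sum, Finset.sum_sub_distrib]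
    ring
  have hgoal : b - ℓ i * s i ^ α
      = (∑ k ∈ Finset.Iio i,
          (α * (w k * P k ^ ((α - 1)/α) * (α - 1) ^ (-((α - 1)/α))
              - w k * Q k ^ ((α - 1)/α) * (α - 1) ^ (-((α - 1)/α))) - p i * ℓ k))
        + ((α - 1) * (w i * P i ^ ((α - 1)/α) * (α - 1) ^ (-((α - 1)/α))) - p i * ℓ i) := by
    rw [hb, hOPTsplit, hOPT'split, hIicE, hIicL, hsum1, hE i, h1]
    ring
  -- termwise positivity
  have hterm : ∀ k ∈ Finset.Iio i,
      0 < α * (w k * P k ^ ((α - 1)/α) * (α - 1) ^ (-((α - 1)/α))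
            - w k * Q k ^ ((α - 1)/α) * (α - 1) ^ (-((α - 1)/α))) - p i * ℓ k := by
    intro k hk
    have hk' := Finset.mem_Iio.1 hk
    rw [hL k]
    exact term_lt hα (hw k) (hQpos k hk') (hp i) (hQP k hk'.le).symm
  have hPisplit : P i = p i + ∑ j ∈ Finset.Ioi i, p j := by
    rw [hPdef]
    simp only
    rw [← Finset.Ioi_insert, Finset.sum_insert (by simp)]
  have hR : 0 ≤ ∑ j ∈ Finset.Ioi i, p j := Finset.sum_nonneg fun j _ => (hp j).le
  have htermI_eq : (α - 1) * (w i * P i ^ ((α - 1)/α) * (α - 1) ^ (-((α - 1)/α))) - p i * ℓ i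
      = (α - 1) * w i * (α - 1) ^ (-((α - 1)/α)) * P i ^ ((α - 1)/α - 1)
        * ∑ j ∈ Finset.Ioi i, p j := by
    rw [hL i]
    exact termI_eq hα (hP i) hPisplit
  rw [gt_iff_lt, ← sub_pos, hgoal]
  by_cases hne : (Finset.Ioi i).Nonempty
  · -- some job after i : the k = i term is strictly positive
    have hRpos : 0 < ∑ j ∈ Finset.Ioi i, p j := Finset.sum_pos (fun j _ => hp j) hne
    have h2 : 0 < (α - 1) * (w i * P i ^ ((α - 1)/α) * (α - 1) ^ (-((α - 1)/α))) - p i * ℓ i := by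
      rw [htermI_eq]
      have : 0 < (α - 1) * w i * (α - 1) ^ (-((α - 1)/α)) * P i ^ ((α - 1)/α - 1) := by
        have := hw i; have := hP i; positivity
      exact mul_pos this hRpos
    have h3 : 0 ≤ ∑ k ∈ Finset.Iio i,
        (α * (w k * P k ^ ((α - 1)/α) * (α - 1) ^ (-((α - 1)/α))
            - w k * Q k ^ ((α - 1)/α) * (α - 1) ^ (-((α - 1)/α))) - p i * ℓ k) :=
      Finset.sum_nonneg fun k hk => (hterm k hk).le
    linarith
  · -- i is the last job; then i > 0 and the sum over Iio i is strictly positive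
    have hlast : (i : ℕ) = n - 1 := by
      by_contra h
      have hlt : (i : ℕ) + 1 < n := by omega
      exact hne ⟨⟨(i : ℕ) + 1, hlt⟩, Finset.mem_Ioi.2 (by simp [Fin.lt_def])⟩
    have h0i : (⟨0, by omega⟩ : Fin n) < i := by
      rw [Fin.lt_def]
      simp only
      omega
    have hne' : (Finset.Iio i).Nonempty := ⟨⟨0, by omega⟩, Finset.mem_Iio.2 h0i⟩
    have h2 : 0 ≤ (α - 1) * (w i * P i ^ ((α - 1)/α) * (α - 1) ^ (-((α - 1)/α))) - p i * ℓ i := by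
      rw [htermI_eq]
      exact mul_nonneg (by have := hw i; have := hP i; positivity) hR
    have h3 : 0 < ∑ k ∈ Finset.Iio i,
        (α * (w k * P k ^ ((α - 1)/α) * (α - 1) ^ (-((α - 1)/α))
            - w k * Q k ^ ((α - 1)/α) * (α - 1) ^ (-((α - 1)/α))) - p i * ℓ k) :=
      Finset.sum_pos hterm hne'
    linarith
end

section
/- The marginal energy cost satisfies OPT_π(p̂) − OPT_π(p̂_{−i}) < (p̂_i/(α−1))·Σ_{k=1}^i ℓ_k + ℓ_i s_i^α. -/
open Real Finset

private lemma key_ineq (β T q : ℝ) (hβ0 : 0 < β) (hβ1 : β ≤ 1) (hq : 0 < q) (h : q < T) :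
    T ^ β - (T - q) ^ β ≤ q * T ^ (β - 1) := by
  have hT : 0 < T := hq.trans h
  have hx0 : 0 < (T - q) / T := div_pos (by linarith) hT
  have hx1 : (T - q) / T ≤ 1 := by rw [div_le_one hT]; linarith
  have h1 : ((T - q)/T) ^ (1:ℝ) ≤ ((T - q)/T) ^ β :=
    Real.rpow_le_rpow_of_exponent_ge hx0 hx1 hβ1
  rw [Real.rpow_one] at h1
  have h2 : (T - q) ^ β = T ^ β * ((T - q)/T) ^ β := by
    rw [← Real.mul_rpow hT.le hx0.le]
    congr 1
    field_simp
  have h3 : T ^ (β - 1) = T ^ β / T := by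
    rw [Real.rpow_sub hT, Real.rpow_one]
  have hTβ : 0 < T ^ β := Real.rpow_pos_of_pos hT _
  rw [h2, h3]
  have hmul := mul_le_mul_of_nonneg_left h1 hTβ.le
  have heq : T ^ β * ((T - q)/T) = T ^ β - q * (T ^ β / T) := by
    field_simp
  linarith

private lemma div_rpow_eq (x y z : ℝ) (hx : 0 < x) (hy : 0 < y) :
    (x / y) ^ z = x ^ z * y ^ (-z) := by
  rw [Real.div_rpow hx.le hy.le, Real.rpow_neg hy.le, div_eq_mul_inv]

private lemma aux_diff (α : ℝ) (hα : 1 < α) (w T' q : ℝ) (hw : 0 < w) (hT' : 0 < T')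
    (hq : 0 < q) :
    w * ((α-1)/(T' + q)) ^ ((1:ℝ)/α - 1) - w * ((α-1)/T') ^ ((1:ℝ)/α - 1)
      ≤ q/(α-1) * (w * ((α-1)/(T' + q)) ^ ((1:ℝ)/α)) := by
  have hc : (0:ℝ) < α - 1 := by linarith
  have hα0 : (0:ℝ) < α := by linarith
  have hT : 0 < T' + q := by linarith
  set β : ℝ := 1 - 1/α with hβ
  have hβ0 : 0 < β := by
    have : 1/α < 1 := by rw [div_lt_one hα0]; exact hα
    rw [hβ]; linarith
  have hβ1 : β ≤ 1 := by
    have : 0 < 1/α := by positivity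
    rw [hβ]; linarith
  rw [div_rpow_eq _ _ _ hc hT, div_rpow_eq _ _ _ hc hT', div_rpow_eq _ _ _ hc hT]
  rw [show -((1:ℝ)/α - 1) = β by rw [hβ]; ring]
  rw [show (1:ℝ)/α - 1 = -β by rw [hβ]; ring]
  rw [show -((1:ℝ)/α) = β - 1 by rw [hβ]; ring]
  have hkey : (T' + q) ^ β - T' ^ β ≤ q * (T' + q) ^ (β - 1) := by
    have := key_ineq β (T' + q) q hβ0 hβ1 hq (by linarith)
    rw [show T' + q - q = T' by ring] at this
    exact this
  have hcinv : (α-1) ^ ((1:ℝ)/α) = (α-1) * (α-1) ^ (-β) := by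
    rw [show (1:ℝ)/α = 1 + -β by rw [hβ]; ring, Real.rpow_add hc, Real.rpow_one]
  have hcb : 0 < (α-1) ^ (-β) := Real.rpow_pos_of_pos hc _
  calc w * ((α-1) ^ (-β) * (T' + q) ^ β) - w * ((α-1) ^ (-β) * T' ^ β)
      = (w * (α-1) ^ (-β)) * ((T' + q) ^ β - T' ^ β) := by ring
    _ ≤ (w * (α-1) ^ (-β)) * (q * (T' + q) ^ (β - 1)) :=
        mul_le_mul_of_nonneg_left hkey (by positivity)
    _ = q/(α-1) * (w * ((α-1) * (α-1) ^ (-β) * (T' + q) ^ (β - 1))) := by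
        field_simp
    _ = q/(α-1) * (w * ((α-1) ^ ((1:ℝ)/α) * (T' + q) ^ (β - 1))) := by rw [hcinv]

private lemma termval (α : ℝ) (hα : 1 < α) (w T l : ℝ) (hw : 0 < w) (hT : 0 < T)
    (hl : l = w * ((α-1)/T) ^ ((1:ℝ)/α)) :
    l * (w / l) ^ α = w * ((α-1)/T) ^ ((1:ℝ)/α - 1) := by
  have hb : 0 < (α-1)/T := div_pos (by linarith) hT
  have hr : 0 < ((α-1)/T) ^ ((1:ℝ)/α) := Real.rpow_pos_of_pos hb _
  have hα0 : (0:ℝ) < α := by linarith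
  have hwl : w / l = ((α-1)/T) ^ (-((1:ℝ)/α)) := by
    rw [hl, Real.rpow_neg hb.le]
    field_simp
  rw [hwl, hl, ← Real.rpow_mul hb.le, mul_assoc, ← Real.rpow_add hb]
  congr 1
  field_simp
  ring

/-- The marginal energy cost of player `i` is bounded:
`OPT_π(p̂) − OPT_π(p̂_{−i}) < (p̂_i/(α−1))·∑_{k≤i} ℓ_k + ℓ_i s_i^α`. -/
theorem stmt10 (n : ℕ) (α : ℝ) (hα : 1 < α) (w p : Fin n → ℝ)
    (hw : ∀ j, 0 < w j) (hp : ∀ j, 0 < p j)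
    (ℓ : Fin n → ℝ)
    (hℓ : ∀ k, ℓ k = w k * ((α - 1) / ∑ j ∈ Finset.Ici k, p j) ^ (1/α))
    (s : Fin n → ℝ) (hs : ∀ k, s k = w k / ℓ k)
    (OPT : ℝ) (hOPT : OPT = ∑ k, ℓ k * (s k) ^ α)
    (i : Fin n)
    (ℓ' : Fin n → ℝ)
    (hℓ' : ∀ k, ℓ' k = w k * ((α - 1) / ∑ j ∈ (Finset.Ici k).erase i, p j) ^ (1/α))
    (OPT' : ℝ) (hOPT' : OPT' = ∑ k ∈ Finset.univ.erase i, ℓ' k * (w k / ℓ' k) ^ α) :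
    OPT - OPT' < p i / (α - 1) * (∑ k ∈ Finset.Iic i, ℓ k) + ℓ i * (s i) ^ α := by
  have hc : (0:ℝ) < α - 1 := by linarith
  have hS : ∀ k : Fin n, 0 < ∑ j ∈ Finset.Ici k, p j := fun k =>
    Finset.sum_pos (fun j _ => hp j) ⟨k, Finset.mem_Ici.2 le_rfl⟩
  have hS' : ∀ k : Fin n, k ≠ i → 0 < ∑ j ∈ (Finset.Ici k).erase i, p j := fun k hk =>
    Finset.sum_pos (fun j _ => hp j) ⟨k, Finset.mem_erase.2 ⟨hk, Finset.mem_Ici.2 le_rfl⟩⟩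
  have hℓpos : ∀ k, 0 < ℓ k := fun k => by
    rw [hℓ k]
    exact mul_pos (hw k) (Real.rpow_pos_of_pos (div_pos hc (hS k)) _)
  -- closed forms of terms
  set t : Fin n → ℝ := fun k => w k * ((α-1)/∑ j ∈ Finset.Ici k, p j) ^ ((1:ℝ)/α - 1) with ht
  set t' : Fin n → ℝ := fun k => w k * ((α-1)/∑ j ∈ (Finset.Ici k).erase i, p j) ^ ((1:ℝ)/α - 1) with ht'
  have hterm : ∀ k, ℓ k * (s k) ^ α = t k := fun k => by
    rw [hs k]
    exact termval α hα (w k) _ (ℓ k) (hw k) (hS k) (hℓ k)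
  have hterm' : ∀ k, k ≠ i → ℓ' k * (w k / ℓ' k) ^ α = t' k := fun k hk =>
    termval α hα (w k) _ (ℓ' k) (hw k) (hS' k hk) (hℓ' k)
  -- split OPT
  have hOPTs : OPT = ℓ i * (s i) ^ α + ∑ k ∈ Finset.univ.erase i, t k := by
    rw [hOPT, ← Finset.add_sum_erase _ _ (Finset.mem_univ i)]
    congr 1
    exact Finset.sum_congr rfl fun k hk => hterm k
  have hOPT's : OPT' = ∑ k ∈ Finset.univ.erase i, t' k := by
    rw [hOPT']
    exact Finset.sum_congr rfl fun k hk => hterm' k (Finset.mem_erase.1 hk).1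
  have hdiff : OPT - OPT' = ℓ i * (s i) ^ α + ∑ k ∈ Finset.univ.erase i, (t k - t' k) := by
    rw [hOPTs, hOPT's, Finset.sum_sub_distrib]
    ring
  -- restrict to Iio i
  have hrestrict : ∑ k ∈ Finset.univ.erase i, (t k - t' k) = ∑ k ∈ Finset.Iio i, (t k - t' k) := by
    refine (Finset.sum_subset (fun k hk => ?_) (fun k hk hk' => ?_)).symm
    · exact Finset.mem_erase.2 ⟨(Finset.mem_Iio.1 hk).ne, Finset.mem_univ k⟩
    · have hki : i < k := lt_of_le_of_ne (not_lt.1 (fun h => hk' (Finset.mem_Iio.2 h)))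
        (Ne.symm (Finset.mem_erase.1 hk).1)
      have : i ∉ Finset.Ici k := fun h => absurd (Finset.mem_Ici.1 h) (not_le.2 hki)
      rw [ht, ht']
      simp only [Finset.erase_eq_of_notMem this, sub_self]
  -- per-term bound on Iio i
  have hbound : ∀ k ∈ Finset.Iio i, t k - t' k ≤ p i / (α - 1) * ℓ k := by
    intro k hk
    have hki : k < i := Finset.mem_Iio.1 hk
    have hiI : i ∈ Finset.Ici k := Finset.mem_Ici.2 hki.le
    have hsplit : ∑ j ∈ Finset.Ici k, p j = (∑ j ∈ (Finset.Ici k).erase i, p j) + p i :=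
      (Finset.sum_erase_add _ _ hiI).symm
    have := aux_diff α hα (w k) (∑ j ∈ (Finset.Ici k).erase i, p j) (p i) (hw k)
      (hS' k hki.ne) (hp i)
    rw [← hsplit] at this
    rw [ht, ht', hℓ k]
    convert this using 3
  -- sum bounds
  have hsum : ∑ k ∈ Finset.Iio i, (t k - t' k) ≤ ∑ k ∈ Finset.Iio i, p i / (α - 1) * ℓ k :=
    Finset.sum_le_sum hbound
  have hlast : ∑ k ∈ Finset.Iio i, p i / (α - 1) * ℓ k
      < p i / (α - 1) * (∑ k ∈ Finset.Iic i, ℓ k) := by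
    rw [Finset.mul_sum, ← Finset.Iio_insert, Finset.sum_insert (Finset.notMem_Iio_self)]
    have : 0 < p i / (α - 1) * ℓ i := mul_pos (div_pos (hp i) hc) (hℓpos i)
    linarith
  rw [hdiff, hrestrict]
  linarith
end

section
/- The total cost shares are bounded: OPT_π(p̂) ≤ Σ_{i=1}^n b_i ≤ (α+1)·OPT_π(p̂), i.e., the mechanism is (α+1)-budget-balanced. -/
open Real Finset

/-- Increments of a concave power function are decreasing. -/
lemma incrA {β : ℝ} (hβ0 : 0 < β) (hβ1 : β ≤ 1) {t : ℝ} (ht : 0 ≤ t) :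
    AntitoneOn (fun x : ℝ => (x + t) ^ β - x ^ β) (Set.Ici 0) := by
  apply antitoneOn_of_deriv_nonpos (convex_Ici 0)
  · apply ContinuousOn.sub
    · apply ContinuousOn.rpow_const
      · exact (continuous_id.add continuous_const).continuousOn
      · intro x hx; right; exact hβ0.le
    · apply ContinuousOn.rpow_const continuousOn_id
      intro x hx; right; exact hβ0.le
  · intro x hx
    rw [interior_Ici] at hx
    have hx0 : (0:ℝ) < x := hx
    have h1 : HasDerivAt (fun x : ℝ => (x + t) ^ β) (β * (x + t) ^ (β - 1)) x := by
      have := (Real.hasDerivAt_rpow_const (x := x + t) (p := β)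
        (Or.inl (by positivity))).comp x ((hasDerivAt_id x).add_const t)
      simpa [Function.comp_def] using this
    have h2 : HasDerivAt (fun x : ℝ => x ^ β) (β * x ^ (β - 1)) x :=
      Real.hasDerivAt_rpow_const (Or.inl hx0.ne')
    exact (h1.sub h2).differentiableAt.differentiableWithinAt
  · intro x hx
    rw [interior_Ici] at hx
    have hx0 : (0:ℝ) < x := hx
    have h1 : HasDerivAt (fun x : ℝ => (x + t) ^ β) (β * (x + t) ^ (β - 1)) x := by
      have := (Real.hasDerivAt_rpow_const (x := x + t) (p := β)
        (Or.inl (by positivity))).comp x ((hasDerivAt_id x).add_const t)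
      simpa [Function.comp_def] using this
    have h2 : HasDerivAt (fun x : ℝ => x ^ β) (β * x ^ (β - 1)) x :=
      Real.hasDerivAt_rpow_const (Or.inl hx0.ne')
    rw [show deriv (fun x : ℝ => (x + t) ^ β - x ^ β) x = β * (x + t) ^ (β - 1) - β * x ^ (β - 1) from (h1.sub h2).deriv]
    have : (x + t) ^ (β - 1) ≤ x ^ (β - 1) :=
      Real.rpow_le_rpow_of_nonpos hx0 (by linarith) (by linarith)
    nlinarith

lemma incrA' {β a b t : ℝ} (hβ0 : 0 < β) (hβ1 : β ≤ 1) (ha : 0 ≤ a) (hab : a ≤ b)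
    (ht : 0 ≤ t) : (b + t) ^ β - b ^ β ≤ (a + t) ^ β - a ^ β :=
  incrA hβ0 hβ1 ht ha (le_trans ha hab) hab

/-- Telescoping bound for sums of increments of a concave power. -/
lemma telesB {ι : Type*} [DecidableEq ι] {β : ℝ} (hβ0 : 0 < β) (hβ1 : β ≤ 1)
    (p : ι → ℝ) (S : Finset ι) (hp : ∀ i ∈ S, 0 ≤ p i) {P : ℝ}
    (hP : ∑ j ∈ S, p j ≤ P) :
    ∑ i ∈ S, (P ^ β - (P - p i) ^ β) ≤ P ^ β - (P - ∑ j ∈ S, p j) ^ β := by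
  induction S using Finset.induction_on with
  | empty => simp
  | @insert a S ha IH =>
    have hpa : 0 ≤ p a := hp a (mem_insert_self _ _)
    have hpS : ∀ i ∈ S, 0 ≤ p i := fun i hi => hp i (mem_insert_of_mem hi)
    have hT : 0 ≤ ∑ j ∈ S, p j := Finset.sum_nonneg hpS
    rw [Finset.sum_insert ha, Finset.sum_insert ha] at *
    have h1 : ∑ i ∈ S, (P ^ β - (P - p i) ^ β) ≤ P ^ β - (P - ∑ j ∈ S, p j) ^ β :=
      IH hpS (by linarith)
    have h2 : P ^ β - (P - p a) ^ β ≤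
        (P - ∑ j ∈ S, p j) ^ β - (P - ∑ j ∈ S, p j - p a) ^ β := by
      have := incrA' (a := P - ∑ j ∈ S, p j - p a) (b := P - p a) (t := p a)
        hβ0 hβ1 (by linarith) (by linarith) hpa
      have e1 : P - ∑ j ∈ S, p j - p a + p a = P - ∑ j ∈ S, p j := by ring
      have e2 : P - p a + p a = P := by ring
      rw [e1, e2] at this
      linarith
    have e3 : P - (p a + ∑ j ∈ S, p j) = P - ∑ j ∈ S, p j - p a := by ring
    rw [e3]
    linarith

/-- Closed form of the energy term. -/
lemma term_eq {α w x : ℝ} (hα : 1 < α) (hw : 0 < w) (hx : 0 < x) :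
    (w * ((α - 1) / x) ^ (1/α)) * (w / (w * ((α - 1) / x) ^ (1/α))) ^ α
      = w * (x / (α - 1)) ^ ((α - 1)/α) := by
  have hα0 : (0:ℝ) < α := by linarith
  have hq : (0:ℝ) < (α - 1) / x := div_pos (by linarith) hx
  have hq1 : (0:ℝ) < ((α - 1) / x) ^ (1/α) := Real.rpow_pos_of_pos hq _
  have hdiv : w / (w * ((α - 1) / x) ^ (1/α)) = (((α - 1) / x) ^ (1/α))⁻¹ := by
    field_simp
  rw [hdiv, Real.inv_rpow hq1.le, ← Real.rpow_mul hq.le, one_div,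
    inv_mul_cancel₀ hα0.ne', Real.rpow_one]
  have e : x / (α - 1) = ((α - 1) / x)⁻¹ := (inv_div _ _).symm
  rw [e, Real.inv_rpow hq.le, ← Real.rpow_neg hq.le, ← Real.rpow_neg_one ((α-1)/x),
    mul_assoc, ← Real.rpow_add hq]
  congr 1
  field_simp
  ring_nf

/-- Closed form of `ℓ · P`. -/
lemma term_mul {α w x : ℝ} (hα : 1 < α) (hw : 0 < w) (hx : 0 < x) :
    (w * ((α - 1) / x) ^ (1/α)) * x
      = (α - 1) * (w * (x / (α - 1)) ^ ((α - 1)/α)) := by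
  have hα0 : (0:ℝ) < α := by linarith
  have hq : (0:ℝ) < (α - 1) / x := div_pos (by linarith) hx
  have e : x / (α - 1) = ((α - 1) / x)⁻¹ := (inv_div _ _).symm
  rw [e, Real.inv_rpow hq.le, ← Real.rpow_neg hq.le]
  have e2 : (-((α - 1)/α)) = 1/α + (-1) := by field_simp; ring
  rw [e2, Real.rpow_add hq, Real.rpow_neg_one, inv_div]
  have h3 : (α - 1) * (w * (((α - 1)/x) ^ (1/α) * (x / (α - 1))))
      = w * ((α - 1)/x) ^ (1/α) * x * ((α - 1) / (α - 1)) := by ring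
  rw [h3, div_self (by linarith : α - 1 ≠ 0), mul_one]

/-- The mechanism is `(α+1)`-budget-balanced:
`OPT_π(p̂) ≤ ∑ b_i ≤ (α+1)·OPT_π(p̂)`. -/
theorem stmt11 (n : ℕ) (α : ℝ) (hα : 1 < α) (w p : Fin n → ℝ)
    (hw : ∀ j, 0 < w j) (hp : ∀ j, 0 < p j)
    (ℓ : Fin n → ℝ)
    (hℓ : ∀ k, ℓ k = w k * ((α - 1) / ∑ j ∈ Finset.Ici k, p j) ^ (1/α))
    (s : Fin n → ℝ) (hs : ∀ k, s k = w k / ℓ k)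
    (OPT : ℝ) (hOPT : OPT = ∑ k, ℓ k * (s k) ^ α)
    (ℓ' : Fin n → Fin n → ℝ)
    (hℓ' : ∀ i k, ℓ' i k = w k * ((α - 1) / ∑ j ∈ (Finset.Ici k).erase i, p j) ^ (1/α))
    (OPT' : Fin n → ℝ)
    (hOPT' : ∀ i, OPT' i = ∑ k ∈ Finset.univ.erase i, ℓ' i k * (w k / ℓ' i k) ^ α)
    (b : Fin n → ℝ)
    (hb : ∀ i, b i = α * (OPT - OPT' i) - p i * ∑ k ∈ Finset.Iic i, ℓ k) :
    OPT ≤ ∑ i, b i ∧ ∑ i, b i ≤ (α + 1) * OPT := by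
  have hα0 : (0:ℝ) < α := by linarith
  have hα1 : (0:ℝ) < α - 1 := by linarith
  have hβ0 : (0:ℝ) < (α - 1)/α := by positivity
  have hβ1 : (α - 1)/α ≤ 1 := by
    rw [div_le_one hα0]; linarith
  set g : ℝ → ℝ := fun x => (x/(α-1)) ^ ((α-1)/α) with hg
  set P : Fin n → ℝ := fun k => ∑ j ∈ Finset.Ici k, p j with hPdef
  have hP : ∀ k, 0 < P k := fun k =>
    Finset.sum_pos (fun j _ => hp j) ⟨k, Finset.mem_Ici.2 le_rfl⟩
  have hple : ∀ k i : Fin n, k ≤ i → p i ≤ P k := fun k i h =>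
    Finset.single_le_sum (fun j _ => (hp j).le) (Finset.mem_Ici.2 h)
  have gmono : ∀ {x y : ℝ}, 0 ≤ x → x ≤ y → g x ≤ g y := by
    intro x y hx hxy
    exact Real.rpow_le_rpow (by positivity) (by gcongr) hβ0.le
  -- OPT in closed form
  have hOPTg : OPT = ∑ k, w k * g (P k) := by
    rw [hOPT]
    refine Finset.sum_congr rfl fun k _ => ?_
    rw [hs k, hℓ k]
    exact term_eq hα (hw k) (hP k)
  -- OPT' in closed form
  have hOPT'g : ∀ i, OPT' i =
      ∑ k ∈ Finset.univ.erase i, w k * g (∑ j ∈ (Finset.Ici k).erase i, p j) := by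
    intro i
    rw [hOPT' i]
    refine Finset.sum_congr rfl fun k hk => ?_
    have hk' : k ≠ i := Finset.ne_of_mem_erase hk
    have hpos : 0 < ∑ j ∈ (Finset.Ici k).erase i, p j :=
      Finset.sum_pos (fun j _ => hp j)
        ⟨k, Finset.mem_erase.2 ⟨hk', Finset.mem_Ici.2 le_rfl⟩⟩
    rw [hℓ' i k]
    exact term_eq hα (hw k) hpos
  -- the marginal contribution of player i
  have hdiff : ∀ i, OPT - OPT' i =
      w i * g (P i) + ∑ k ∈ Finset.Iio i, w k * (g (P k) - g (P k - p i)) := by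
    intro i
    have e0 : OPT = w i * g (P i) + ∑ k ∈ Finset.univ.erase i, w k * g (P k) := by
      rw [hOPTg]
      have h := Finset.sum_erase_eq_sub (f := fun k => w k * g (P k)) (Finset.mem_univ i)
      linarith
    rw [e0, hOPT'g i]
    have e1 : ∀ k ∈ Finset.univ.erase i,
        w k * g (P k) - w k * g (∑ j ∈ (Finset.Ici k).erase i, p j)
          = if k < i then w k * (g (P k) - g (P k - p i)) else 0 := by
      intro k hk
      have hki : k ≠ i := Finset.ne_of_mem_erase hk
      by_cases h : k < i
      · rw [if_pos h]
        have hsub : ∑ j ∈ (Finset.Ici k).erase i, p j = P k - p i :=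
          Finset.sum_erase_eq_sub (Finset.mem_Ici.2 h.le)
        rw [hsub]; ring
      · rw [if_neg h]
        have hnot : i ∉ Finset.Ici k := by
          rw [Finset.mem_Ici]
          intro hle
          exact h (hki.lt_of_le hle)
        rw [Finset.erase_eq_of_notMem hnot]
        have : ∑ j ∈ Finset.Ici k, p j = P k := rfl
        rw [this]; ring
    have e2 : ∑ k ∈ Finset.univ.erase i,
        (w k * g (P k) - w k * g (∑ j ∈ (Finset.Ici k).erase i, p j))
          = ∑ k ∈ Finset.Iio i, w k * (g (P k) - g (P k - p i)) := by
      rw [Finset.sum_congr rfl e1, Finset.sum_erase _ (by simp), ← Finset.sum_filter]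
      congr 1
      ext x
      simp
    rw [← e2, Finset.sum_sub_distrib]
    ring
  -- the double-counting term
  set D : ℝ := ∑ k, ∑ i ∈ Finset.Ioi k, w k * (g (P k) - g (P k - p i)) with hD
  have hswap : ∑ i, ∑ k ∈ Finset.Iio i, w k * (g (P k) - g (P k - p i)) = D := by
    rw [hD]
    exact Finset.sum_comm' (by intro x y; simp)
  have hsum_diff : ∑ i, (OPT - OPT' i) = OPT + D := by
    rw [Finset.sum_congr rfl fun i _ => hdiff i, Finset.sum_add_distrib, ← hOPTg, hswap]
  -- the penalty sum
  have hpen : ∑ i, p i * ∑ k ∈ Finset.Iic i, ℓ k = (α - 1) * OPT := by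
    have e : ∀ i, p i * ∑ k ∈ Finset.Iic i, ℓ k = ∑ k ∈ Finset.Iic i, ℓ k * p i := by
      intro i
      rw [Finset.mul_sum]
      exact Finset.sum_congr rfl fun k _ => by ring
    calc ∑ i, p i * ∑ k ∈ Finset.Iic i, ℓ k
        = ∑ i, ∑ k ∈ Finset.Iic i, ℓ k * p i := Finset.sum_congr rfl fun i _ => e i
      _ = ∑ k, ∑ i ∈ Finset.Ici k, ℓ k * p i :=
          Finset.sum_comm' (by intro x y; simp)
      _ = ∑ k, ℓ k * P k := by
          refine Finset.sum_congr rfl fun k _ => ?_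
          rw [← Finset.mul_sum]
      _ = ∑ k, (α - 1) * (w k * g (P k)) := by
          refine Finset.sum_congr rfl fun k _ => ?_
          rw [hℓ k]
          exact term_mul hα (hw k) (hP k)
      _ = (α - 1) * OPT := by rw [hOPTg, Finset.mul_sum]
  -- total payments
  have hb_sum : ∑ i, b i = OPT + α * D := by
    calc ∑ i, b i
        = ∑ i, (α * (OPT - OPT' i) - p i * ∑ k ∈ Finset.Iic i, ℓ k) :=
          Finset.sum_congr rfl fun i _ => hb i
      _ = α * ∑ i, (OPT - OPT' i) - ∑ i, p i * ∑ k ∈ Finset.Iic i, ℓ k := by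
          rw [Finset.sum_sub_distrib, Finset.mul_sum]
      _ = α * (OPT + D) - (α - 1) * OPT := by rw [hsum_diff, hpen]
      _ = OPT + α * D := by ring
  -- D is nonnegative
  have hD0 : 0 ≤ D := by
    refine Finset.sum_nonneg fun k _ => Finset.sum_nonneg fun i hi => ?_
    have hk : k ≤ i := (Finset.mem_Ioi.1 hi).le
    have h1 : p i ≤ P k := hple k i hk
    exact mul_nonneg (hw k).le
      (sub_nonneg.2 (gmono (by linarith) (by linarith [hp i])))
  -- D is bounded by OPT
  have hDle : D ≤ OPT := by
    rw [hOPTg, hD]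
    refine Finset.sum_le_sum fun k _ => ?_
    rw [← Finset.mul_sum]
    refine mul_le_mul_of_nonneg_left ?_ (hw k).le
    have hT : ∑ i ∈ Finset.Ioi k, p i = P k - p k := by
      rw [← Finset.Ici_erase]
      exact Finset.sum_erase_eq_sub (Finset.mem_Ici.2 le_rfl)
    have hTle : ∑ i ∈ Finset.Ioi k, p i ≤ P k := by
      rw [hT]; linarith [hp k]
    have hgx : ∀ x : ℝ, 0 ≤ x → g x = x ^ ((α-1)/α) / (α-1) ^ ((α-1)/α) :=
      fun x hx => Real.div_rpow hx hα1.le _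
    have hc : (0:ℝ) < (α-1) ^ ((α-1)/α) := Real.rpow_pos_of_pos hα1 _
    have e4 : ∑ i ∈ Finset.Ioi k, (g (P k) - g (P k - p i))
        = (∑ i ∈ Finset.Ioi k, (P k ^ ((α-1)/α) - (P k - p i) ^ ((α-1)/α)))
            / (α-1) ^ ((α-1)/α) := by
      rw [Finset.sum_div]
      refine Finset.sum_congr rfl fun i hi => ?_
      have hk : k ≤ i := (Finset.mem_Ioi.1 hi).le
      have h1 : p i ≤ P k := hple k i hk
      rw [hgx _ (hP k).le, hgx _ (by linarith)]
      ring
    rw [e4, hgx _ (hP k).le]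
    have key := telesB hβ0 hβ1 p (Finset.Ioi k) (fun i _ => (hp i).le) hTle
    have hrem : 0 ≤ (P k - ∑ j ∈ Finset.Ioi k, p j) ^ ((α-1)/α) :=
      Real.rpow_nonneg (by rw [hT]; linarith [hp k]) _
    apply div_le_div_of_nonneg_right _ hc.le
    linarith
  constructor
  · rw [hb_sum]
    nlinarith
  · rw [hb_sum]
    nlinarith
end

section
/- At the optimal lengths, the weighted flow time equals (α−1) times the energy: Σ_j p_j Σ_{k=1}^j ℓ_k = (α−1)·Σ_j w_j^α ℓ_j^(1−α). Consequently the minimal social cost equals α times its energy component. -/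
open Real Finset

/-- At the optimal lengths, the flow time equals `(α−1)` times the energy, and
hence the minimal social cost `E + F` equals `α·E`. -/
theorem stmt12 (n : ℕ) (α : ℝ) (hα : 1 < α) (w p : Fin n → ℝ)
    (hw : ∀ j, 0 < w j) (hp : ∀ j, 0 < p j)
    (ℓ : Fin n → ℝ)
    (hℓ : ∀ j, ℓ j = w j * ((α - 1) / ∑ k ∈ Finset.Ici j, p k) ^ (1/α))
    (E F : ℝ)
    (hE : E = ∑ j, (w j) ^ α * (ℓ j) ^ (1 - α))
    (hF : F = ∑ j, p j * ∑ k ∈ Finset.Iic j, ℓ k) :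
    F = (α - 1) * E ∧ E + F = α * E := by
  have hα0 : (0:ℝ) < α - 1 := by linarith
  have hαpos : (0:ℝ) < α := by linarith
  have hswap : F = ∑ k, (∑ j ∈ Finset.Ici k, p j) * ℓ k := by
    rw [hF]
    simp_rw [Finset.mul_sum, Finset.sum_mul]
    have h1 : ∀ j : Fin n, Finset.Iic j = Finset.univ.filter (· ≤ j) := by
      intro j; ext k; simp
    have h2 : ∀ k : Fin n, Finset.Ici k = Finset.univ.filter (k ≤ ·) := by
      intro k; ext j; simp
    simp_rw [h1, h2, Finset.sum_filter]
    exact Finset.sum_comm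
  have key : F = (α - 1) * E := by
    rw [hswap, hE, Finset.mul_sum]
    apply Finset.sum_congr rfl
    intro k _
    set S : ℝ := ∑ j ∈ Finset.Ici k, p j with hS
    have hSpos : 0 < S := Finset.sum_pos (fun j _ => hp j) ⟨k, Finset.mem_Ici.mpr le_rfl⟩
    set t : ℝ := (α - 1) / S with ht
    have htpos : 0 < t := div_pos hα0 hSpos
    have hwk := hw k
    have hℓk : ℓ k = w k * t ^ (1/α) := hℓ k
    have hr : 0 < t ^ (1/α) := Real.rpow_pos_of_pos htpos _
    rw [hℓk]
    have hmul : (w k * t ^ (1/α)) ^ (1 - α) = w k ^ (1 - α) * (t ^ (1/α)) ^ (1 - α) :=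
      Real.mul_rpow hwk.le hr.le
    rw [hmul]
    have hww : w k ^ α * w k ^ (1 - α) = w k := by
      rw [← Real.rpow_add hwk]; simp
    have htt : (t ^ (1/α)) ^ (1 - α) = t ^ (1/α) / t := by
      rw [← Real.rpow_mul htpos.le]
      rw [show (1/α) * (1 - α) = 1/α - 1 by field_simp]
      rw [Real.rpow_sub htpos, Real.rpow_one]
    rw [htt]
    have hst : (α - 1) / t = S := by
      rw [ht]; field_simp
    rw [show (α - 1) * (w k ^ α * (w k ^ (1 - α) * (t ^ (1/α) / t)))
        = (w k ^ α * w k ^ (1 - α)) * ((α - 1) / t * t ^ (1/α)) by ring]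
    rw [hww, hst]
    ring
  exact ⟨key, by rw [key]; ring⟩
end

section
/- At the optimal lengths, the optimal speed of job j satisfies s_j^α = (Σ_{k=j}^n p_k)/(α−1); in particular speeds are nonincreasing along the processing order (s_1 ≥ s_2 ≥ ... ≥ s_n). -/
open Real Finset

/-- At the optimal lengths, `s_j^α = (∑_{k≥j} p_k)/(α−1)`, and the speeds are
nonincreasing along the processing order. -/
theorem stmt13 (n : ℕ) (α : ℝ) (hα : 1 < α) (w p : Fin n → ℝ)
    (hw : ∀ j, 0 < w j) (hp : ∀ j, 0 < p j)
    (ℓ : Fin n → ℝ)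
    (hℓ : ∀ j, ℓ j = w j * ((α - 1) / ∑ k ∈ Finset.Ici j, p k) ^ (1/α))
    (s : Fin n → ℝ) (hs : ∀ j, s j = w j / ℓ j) :
    (∀ j, (s j) ^ α = (∑ k ∈ Finset.Ici j, p k) / (α - 1)) ∧ Antitone s := by
  have hα0 : (0:ℝ) < α := lt_trans one_pos hα
  have hα1 : (0:ℝ) < α - 1 := by linarith
  have hP : ∀ j : Fin n, 0 < ∑ k ∈ Finset.Ici j, p k := fun j =>
    Finset.sum_pos (fun k _ => hp k) ⟨j, Finset.mem_Ici.mpr le_rfl⟩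
  have hsval : ∀ j : Fin n, s j = ((∑ k ∈ Finset.Ici j, p k) / (α - 1)) ^ (1/α) := by
    intro j
    have hq : 0 < (α - 1) / ∑ k ∈ Finset.Ici j, p k := div_pos hα1 (hP j)
    have hrpow : (0:ℝ) < ((α - 1) / ∑ k ∈ Finset.Ici j, p k) ^ (1/α) :=
      Real.rpow_pos_of_pos hq _
    rw [hs j, hℓ j, div_mul_eq_div_div, div_self (hw j).ne', one_div,
      ← Real.inv_rpow hq.le, inv_div]
  constructor
  · intro j
    rw [hsval j, ← Real.rpow_mul (le_of_lt (div_pos (hP j) hα1)),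
      one_div, inv_mul_cancel₀ (ne_of_gt hα0), Real.rpow_one]
  · intro i j hij
    rw [hsval i, hsval j]
    apply Real.rpow_le_rpow (le_of_lt (div_pos (hP j) hα1))
    · gcongr
      · exact fun k _ _ => (hp k).le
    · positivity
end

section
/- For all k < i, the difference of energies satisfies α·(ℓ_k s_k^α − ℓ'_k s'^α_k) − ℓ_k p̂_i > 0, where primed quantities are computed with player i's penalty removed. -/
open Real Finset

/-- For `k < i`, the energy difference satisfies
`α(ℓ_k s_k^α − ℓ'_k s'^α_k) − ℓ_k p̂_i > 0`, where `P_k = ∑_{j≥k} p̂_j`,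
`ℓ_k s_k^α = (w_k/(α−1)^(1−1/α)) P_k^(1−1/α)`,
`ℓ'_k s'^α_k = (w_k/(α−1)^(1−1/α)) (P_k − p̂_i)^(1−1/α)`, and
`ℓ_k = w_k((α−1)/P_k)^(1/α)`. -/
theorem stmt15 (n : ℕ) (α : ℝ) (hα : 1 < α) (w p : Fin n → ℝ)
    (hw : ∀ j, 0 < w j) (hp : ∀ j, 0 < p j)
    (i k : Fin n) (hki : k < i)
    (P : ℝ) (hP : P = ∑ j ∈ Finset.Ici k, p j)
    (Ek : ℝ) (hEk : Ek = w k / (α - 1) ^ (1 - 1/α) * P ^ (1 - 1/α))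
    (Ek' : ℝ) (hEk' : Ek' = w k / (α - 1) ^ (1 - 1/α) * (P - p i) ^ (1 - 1/α))
    (ℓk : ℝ) (hℓk : ℓk = w k * ((α - 1) / P) ^ (1/α)) :
    α * (Ek - Ek') - ℓk * p i > 0 := by
  have hα0 : (0:ℝ) < α - 1 := by linarith
  have hαpos : (0:ℝ) < α := by linarith
  have hik : i ∈ Finset.Ici k := Finset.mem_Ici.2 hki.le
  have hkerase : k ∈ (Finset.Ici k).erase i :=
    Finset.mem_erase.2 ⟨hki.ne, Finset.mem_Ici.2 le_rfl⟩
  have hQsum : P - p i = ∑ j ∈ (Finset.Ici k).erase i, p j := by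
    rw [hP, ← Finset.add_sum_erase _ p hik]; ring
  have hQ : 0 < P - p i := by
    rw [hQsum]; exact Finset.sum_pos (fun j _ => hp j) ⟨k, hkerase⟩
  have hP0 : 0 < P := by have := hp i; linarith
  set β : ℝ := 1 - 1/α with hβ
  have hβ0 : 0 < β := by
    have : 1/α < 1 := by rw [div_lt_one hαpos]; linarith
    simp only [hβ]; linarith
  have hβ1 : β < 1 := by
    have : 0 < 1/α := by positivity
    simp only [hβ]; linarith
  -- Bernoulli: ((P - p i)/P)^β < 1 + β * ((P - p i)/P - 1)
  have hs : (-1:ℝ) ≤ (P - p i)/P - 1 := by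
    have : 0 < (P - p i)/P := div_pos hQ hP0
    linarith
  have hs' : (P - p i)/P - 1 ≠ 0 := by
    have : (P - p i)/P < 1 := by rw [div_lt_one hP0]; have := hp i; linarith
    linarith
  have hbern := rpow_one_add_lt_one_add_mul_self hs hs' hβ0 hβ1
  rw [add_sub_cancel] at hbern
  -- key : P^β - (P - p i)^β > β * P^(β-1) * p i
  have hkey : β * P ^ (β - 1) * p i < P ^ β - (P - p i) ^ β := by
    have hdiv : ((P - p i)/P) ^ β = (P - p i) ^ β / P ^ β :=
      Real.div_rpow hQ.le hP0.le β
    rw [hdiv] at hbern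
    have hPβ : (0:ℝ) < P ^ β := Real.rpow_pos_of_pos hP0 β
    have h2 : (P - p i) ^ β < (1 + β * ((P - p i)/P - 1)) * P ^ β := by
      rw [div_lt_iff₀ hPβ] at hbern; exact hbern
    have hPb1 : P ^ (β - 1) = P ^ β / P := by
      rw [Real.rpow_sub hP0, Real.rpow_one]
    rw [hPb1]
    have : β * (P ^ β / P) * p i = β * (p i / P) * P ^ β := by ring
    rw [this]
    have h3 : (1 + β * ((P - p i)/P - 1)) * P ^ β
        = P ^ β - β * (p i / P) * P ^ β := by
      field_simp; ring
    linarith [h2, h3 ▸ h2]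
  -- ℓk = α * β * (w k / (α-1)^β) * P^(β-1)
  have hC : (0:ℝ) < (α - 1) ^ β := Real.rpow_pos_of_pos hα0 β
  have hℓeq : ℓk = α * β * (w k / (α - 1) ^ β) * P ^ (β - 1) := by
    rw [hℓk]
    have hαβ : α * β = α - 1 := by
      simp only [hβ]; field_simp
    rw [hαβ]
    have h1 : ((α - 1)/P) ^ (1/α) = (α - 1) ^ (1/α) / P ^ (1/α) :=
      Real.div_rpow hα0.le hP0.le _
    have h2 : (α - 1) * ((α - 1) ^ β)⁻¹ = (α - 1) ^ (1/α) := by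
      have h := Real.rpow_add hα0 1 (-β)
      rw [Real.rpow_one, Real.rpow_neg hα0.le] at h
      rw [← h]; congr 1; simp only [hβ]; ring
    have h3 : P ^ (β - 1) = (P ^ (1/α))⁻¹ := by
      rw [← Real.rpow_neg hP0.le]
      congr 1; simp only [hβ]; ring
    rw [h1, h3, ← h2]
    have hPα : (0:ℝ) < P ^ (1/α) := Real.rpow_pos_of_pos hP0 _
    field_simp
  have hw0 : 0 < w k := hw k
  have hCpos : 0 < w k / (α - 1) ^ β := div_pos hw0 hC
  have hEdiff : Ek - Ek' = (w k / (α - 1) ^ β) * (P ^ β - (P - p i) ^ β) := by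
    rw [hEk, hEk']; ring
  rw [hEdiff, hℓeq]
  have := mul_lt_mul_of_pos_left hkey (mul_pos hαpos hCpos)
  nlinarith [this]
end

section
/- At the optimal lengths, player i's cost share equals b_i = ℓ_i(α s_i^α − p̂_i) + Σ_{k=1}^{i-1} [ α(ℓ_k s_k^α − ℓ'_k s'^α_k) − ℓ_k p̂_i ], and the leading term satisfies ℓ_i(α s_i^α − p̂_i) = ℓ_i(s_i^α + Σ_{k=i+1}^n p̂_k) > ℓ_i s_i^α when i < n. -/
open Real Finset

/-- Player `i`'s cost share decomposes as
`b_i = ℓ_i(α s_i^α − p̂_i) + ∑_{k<i} [α(ℓ_k s_k^α − ℓ'_k s'^α_k) − ℓ_k p̂_i]`,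
the leading term equals `ℓ_i(s_i^α + ∑_{k>i} p̂_k)`, and it strictly exceeds
`ℓ_i s_i^α` when `i` is not the last job. -/
theorem stmt16 (n : ℕ) (α : ℝ) (hα : 1 < α) (w p : Fin n → ℝ)
    (hw : ∀ j, 0 < w j) (hp : ∀ j, 0 < p j) (i : Fin n)
    (ℓ : Fin n → ℝ)
    (hℓ : ∀ k, ℓ k = w k * ((α - 1) / ∑ j ∈ Finset.Ici k, p j) ^ (1/α))
    (s : Fin n → ℝ) (hs : ∀ k, s k = w k / ℓ k)
    (OPT : ℝ) (hOPT : OPT = ∑ k, ℓ k * (s k) ^ α)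
    (ℓ' : Fin n → ℝ)
    (hℓ' : ∀ k, ℓ' k = w k * ((α - 1) / ∑ j ∈ (Finset.Ici k).erase i, p j) ^ (1/α))
    (OPT' : ℝ) (hOPT' : OPT' = ∑ k ∈ Finset.univ.erase i, ℓ' k * (w k / ℓ' k) ^ α)
    (b : ℝ) (hb : b = α * (OPT - OPT') - p i * ∑ k ∈ Finset.Iic i, ℓ k) :
    b = ℓ i * (α * (s i) ^ α - p i)
        + ∑ k ∈ Finset.Iio i,
            (α * (ℓ k * (s k) ^ α - ℓ' k * (w k / ℓ' k) ^ α) - ℓ k * p i)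
    ∧ ℓ i * (α * (s i) ^ α - p i)
        = ℓ i * ((s i) ^ α + ∑ k ∈ Finset.Ioi i, p k)
    ∧ ((i : ℕ) + 1 < n → ℓ i * (α * (s i) ^ α - p i) > ℓ i * (s i) ^ α) := by

  have hα0 : (0:ℝ) < α - 1 := by linarith
  have hSpos : ∀ k : Fin n, 0 < ∑ j ∈ Finset.Ici k, p j := fun k =>
    Finset.sum_pos (fun j _ => hp j) ⟨k, Finset.mem_Ici.mpr le_rfl⟩
  have hℓpos : ∀ k, 0 < ℓ k := by
    intro k; rw [hℓ]
    exact mul_pos (hw k) (Real.rpow_pos_of_pos (div_pos hα0 (hSpos k)) _)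
  -- s k ^ α = S k / (α - 1)
  have hsα : ∀ k : Fin n, (s k) ^ α = (∑ j ∈ Finset.Ici k, p j) / (α - 1) := by
    intro k
    set S := ∑ j ∈ Finset.Ici k, p j with hS
    have hc : (0:ℝ) < (α - 1) / S := div_pos hα0 (hSpos k)
    rw [hs k, hℓ k, div_mul_cancel_left₀ (ne_of_gt (hw k))]
    rw [← Real.rpow_neg_one (((α - 1) / S) ^ (1/α)), ← Real.rpow_mul hc.le,
      ← Real.rpow_mul hc.le]
    have hαne : α ≠ 0 := by positivity
    have he : 1/α * (-1 : ℝ) * α = -1 := by field_simp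
    rw [he, Real.rpow_neg_one, inv_div]
  have hIci : ∑ j ∈ Finset.Ici i, p j = p i + ∑ j ∈ Finset.Ioi i, p j := by
    rw [← Finset.Ioi_insert, Finset.sum_insert (by simp)]
  have h2 : ℓ i * (α * (s i) ^ α - p i) = ℓ i * ((s i) ^ α + ∑ k ∈ Finset.Ioi i, p k) := by
    congr 1
    rw [hsα i]
    have hne : α - 1 ≠ 0 := ne_of_gt hα0
    rw [hIci]
    field_simp
    ring
  refine ⟨?_, h2, ?_⟩
  · -- part 1
    have hsplit : Finset.univ.erase i = Finset.Iio i ∪ Finset.Ioi i := by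
      ext k
      simp only [Finset.mem_erase, Finset.mem_union, Finset.mem_Iio, Finset.mem_Ioi,
        Finset.mem_univ, and_true]
      exact ⟨fun h => h.lt_or_gt, fun h => h.elim ne_of_lt ne_of_gt⟩
    have hdisj : Disjoint (Finset.Iio i) (Finset.Ioi i) :=
      Finset.disjoint_left.mpr fun k hk hk' =>
        absurd (Finset.mem_Iio.mp hk) (not_lt.mpr (Finset.mem_Ioi.mp hk').le)
    have key : OPT - OPT'
        = ℓ i * (s i) ^ α
          + ∑ k ∈ Finset.Iio i, (ℓ k * (s k) ^ α - ℓ' k * (w k / ℓ' k) ^ α) := by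
      rw [hOPT, hOPT', ← Finset.sum_erase_add _ _ (Finset.mem_univ i)]
      have : (∑ k ∈ Finset.univ.erase i, ℓ k * (s k) ^ α)
          - ∑ k ∈ Finset.univ.erase i, ℓ' k * (w k / ℓ' k) ^ α
          = ∑ k ∈ Finset.Iio i, (ℓ k * (s k) ^ α - ℓ' k * (w k / ℓ' k) ^ α) := by
        rw [← Finset.sum_sub_distrib, hsplit, Finset.sum_union hdisj]
        have hz : ∑ k ∈ Finset.Ioi i, (ℓ k * (s k) ^ α - ℓ' k * (w k / ℓ' k) ^ α) = 0 := by
          refine Finset.sum_eq_zero fun k hk => ?_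
          have hik : i < k := Finset.mem_Ioi.mp hk
          have hℓ'k : ℓ' k = ℓ k := by
            rw [hℓ' k, hℓ k, Finset.erase_eq_of_notMem]
            simp [Finset.mem_Ici, not_le, hik]
          rw [hℓ'k, ← hs k, sub_self]
        rw [hz, add_zero]
      linarith [this]
    have hnm : i ∉ Finset.Iio i := fun h => lt_irrefl i (Finset.mem_Iio.mp h)
    have hR : (∑ k ∈ Finset.Iio i,
          (α * (ℓ k * (s k) ^ α - ℓ' k * (w k / ℓ' k) ^ α) - ℓ k * p i))
        = α * ((∑ k ∈ Finset.Iio i, ℓ k * (s k) ^ α)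
            - ∑ k ∈ Finset.Iio i, ℓ' k * (w k / ℓ' k) ^ α)
          - (∑ k ∈ Finset.Iio i, ℓ k) * p i := by
      rw [Finset.sum_sub_distrib, ← Finset.mul_sum, ← Finset.sum_mul, Finset.sum_sub_distrib]
    rw [hb, key, ← Finset.Iio_insert, Finset.sum_insert hnm, hR, Finset.sum_sub_distrib]
    ring
  · -- part 3
    intro hin
    rw [h2]
    have hpos : 0 < ∑ k ∈ Finset.Ioi i, p k := by
      refine Finset.sum_pos (fun k _ => hp k) ⟨⟨i + 1, hin⟩, Finset.mem_Ioi.mpr ?_⟩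
      exact Fin.lt_def.mpr (Nat.lt_succ_self i)
    have := mul_lt_mul_of_pos_left (by linarith : (s i) ^ α < (s i) ^ α + ∑ k ∈ Finset.Ioi i, p k) (hℓpos i)
    linarith
end

section
/- The social cost at the truthful Nash equilibrium of the mechanism (for a fixed order π) is at most (α+1) times the optimal social cost for that order; in particular since the equilibrium lengths are the minimizers of A_{w,p}(π,·), the equilibrium social cost plus overcharge α·OPT_π(p) is at most (α+1) times min_ℓ A_{w,p}(π,ℓ) = α·OPT_π(p). -/
open Real Finset

private lemma key_young {α t : ℝ} (hα : 1 < α) (ht : 0 < t) :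
    α ≤ t ^ (1 - α) + (α - 1) * t := by
  have hα0 : (0:ℝ) < α := by linarith
  have hα1 : (0:ℝ) < α - 1 := by linarith
  have hc : α.HolderConjugate (α / (α - 1)) :=
    Real.HolderConjugate.conjExponent hα
  have h := Real.young_inequality_of_nonneg
    (a := t ^ ((1 - α) / α)) (b := t ^ ((α - 1) / α))
    (Real.rpow_nonneg ht.le _) (Real.rpow_nonneg ht.le _) hc
  have h1 : t ^ ((1 - α) / α) * t ^ ((α - 1) / α) = 1 := by
    rw [← Real.rpow_add ht, show (1 - α) / α + (α - 1) / α = 0 from by ring, Real.rpow_zero]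
  have h2 : (t ^ ((1 - α) / α)) ^ α = t ^ (1 - α) := by
    rw [← Real.rpow_mul ht.le, div_mul_cancel₀ _ hα0.ne']
  have h3 : (t ^ ((α - 1) / α)) ^ (α / (α - 1)) = t := by
    rw [← Real.rpow_mul ht.le, show (α - 1) / α * (α / (α - 1)) = 1 from by
      field_simp, Real.rpow_one]
  rw [h1, h2, h3] at h
  have h4 : t / (α / (α - 1)) = (α - 1) * t / α := by
    field_simp
  rw [h4] at h
  have := mul_le_mul_of_nonneg_left h hα0.le
  calc α = α * 1 := by ring
    _ ≤ α * (t ^ (1 - α) / α + (α - 1) * t / α) := this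
    _ = t ^ (1 - α) + (α - 1) * t := by field_simp

/-- Efficiency: for a fixed order, the equilibrium lengths minimize the social
cost `A`, the minimal social cost equals `α·OPT_π(p)`, and the equilibrium
social cost plus the overcharge `α·OPT_π(p)` is at most `(α+1)` times the
minimal social cost `α·OPT_π(p)`. -/
theorem stmt18 (n : ℕ) (α : ℝ) (hα : 1 < α) (w p : Fin n → ℝ)
    (hw : ∀ j, 0 < w j) (hp : ∀ j, 0 < p j)
    (ord : Equiv.Perm (Fin n))
    (A : (Fin n → ℝ) → ℝ)
    (hA : A = fun ℓ => ∑ j, (w j) ^ α * (ℓ j) ^ (1 - α)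
        + ∑ j, p j * ∑ i ∈ Finset.univ.filter (fun i => ord i ≤ ord j), ℓ i)
    (ℓopt : Fin n → ℝ)
    (hℓopt : ∀ j, ℓopt j = w j
        * ((α - 1) / ∑ k ∈ Finset.univ.filter (fun k => ord j ≤ ord k), p k) ^ (1/α))
    (OPT : ℝ) (hOPT : OPT = ∑ j, (w j) ^ α * (ℓopt j) ^ (1 - α)) :
    (∀ ℓ : Fin n → ℝ, (∀ j, 0 < ℓ j) → A ℓopt ≤ A ℓ)
    ∧ A ℓopt = α * OPT
    ∧ A ℓopt + α * OPT ≤ (α + 1) * (α * OPT) := by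
  have hα0 : (0:ℝ) < α := by linarith
  have hα1 : (0:ℝ) < α - 1 := by linarith
  set S : Fin n → ℝ := fun j => ∑ k ∈ Finset.univ.filter (fun k => ord j ≤ ord k), p k
    with hS
  have hSpos : ∀ j, 0 < S j := by
    intro j
    apply Finset.sum_pos
    · intro k _; exact hp k
    · exact ⟨j, by simp⟩
  -- rewrite A via sum swap
  have hswap : ∀ ℓ : Fin n → ℝ,
      (∑ j, p j * ∑ i ∈ Finset.univ.filter (fun i => ord i ≤ ord j), ℓ i)
        = ∑ j, S j * ℓ j := by
    intro ℓ
    simp only [hS, Finset.sum_filter, Finset.mul_sum, Finset.sum_mul, mul_ite, ite_mul,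
      mul_zero, zero_mul]
    rw [Finset.sum_comm]
  have hA' : ∀ ℓ : Fin n → ℝ,
      A ℓ = ∑ j, ((w j) ^ α * (ℓ j) ^ (1 - α) + S j * ℓ j) := by
    intro ℓ
    rw [hA]
    simp only
    rw [hswap ℓ, ← Finset.sum_add_distrib]
  -- positivity of ℓopt
  have hℓpos : ∀ j, 0 < ℓopt j := by
    intro j
    rw [hℓopt j]
    exact mul_pos (hw j) (Real.rpow_pos_of_pos (div_pos hα1 (hSpos j)) _)
  -- key algebraic fact: S j * ℓopt j = (α-1) * (w j ^ α * ℓopt j ^ (1-α))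
  have hkey : ∀ j, S j * ℓopt j = (α - 1) * ((w j) ^ α * (ℓopt j) ^ (1 - α)) := by
    intro j
    have hℓα : (ℓopt j) ^ α = (w j) ^ α * ((α - 1) / S j) := by
      rw [hℓopt j, Real.mul_rpow (hw j).le (Real.rpow_nonneg
          (div_pos hα1 (hSpos j)).le _)]
      rw [← Real.rpow_mul (div_pos hα1 (hSpos j)).le,
        one_div, inv_mul_cancel₀ hα0.ne', Real.rpow_one]
    have hsplit : ℓopt j = (ℓopt j) ^ α * (ℓopt j) ^ (1 - α) := by
      rw [← Real.rpow_add (hℓpos j)]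
      norm_num
    calc S j * ℓopt j = S j * ((ℓopt j) ^ α * (ℓopt j) ^ (1 - α)) := by rw [← hsplit]
      _ = S j * ((w j) ^ α * ((α - 1) / S j) * (ℓopt j) ^ (1 - α)) := by rw [hℓα]
      _ = (α - 1) * ((w j) ^ α * (ℓopt j) ^ (1 - α)) := by
          field_simp [(hSpos j).ne']
  -- value at ℓopt
  have hval : A ℓopt = α * OPT := by
    rw [hA' ℓopt, hOPT, Finset.mul_sum]
    apply Finset.sum_congr rfl
    intro j _
    rw [hkey j]; ring
  have hOPTnonneg : 0 ≤ OPT := by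
    rw [hOPT]
    apply Finset.sum_nonneg
    intro j _
    exact mul_nonneg (Real.rpow_nonneg (hw j).le _) (Real.rpow_nonneg (hℓpos j).le _)
  refine ⟨?_, hval, ?_⟩
  · intro ℓ hℓ
    rw [hA' ℓopt, hA' ℓ]
    apply Finset.sum_le_sum
    intro j _
    set t := ℓ j / ℓopt j with ht
    have htpos : 0 < t := div_pos (hℓ j) (hℓpos j)
    have hℓj : ℓ j = t * ℓopt j := by
      rw [ht, div_mul_cancel₀ _ (hℓpos j).ne']
    have hCnn : 0 ≤ (w j) ^ α * (ℓopt j) ^ (1 - α) :=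
      mul_nonneg (Real.rpow_nonneg (hw j).le _) (Real.rpow_nonneg (hℓpos j).le _)
    have hrpow : (ℓ j) ^ (1 - α) = t ^ (1 - α) * (ℓopt j) ^ (1 - α) := by
      rw [hℓj, Real.mul_rpow htpos.le (hℓpos j).le]
    have h2 : S j * ℓ j = t * ((α - 1) * ((w j) ^ α * (ℓopt j) ^ (1 - α))) := by
      rw [hℓj, show S j * (t * ℓopt j) = t * (S j * ℓopt j) from by ring, hkey j]
    have hky := key_young hα htpos
    calc (w j) ^ α * (ℓopt j) ^ (1 - α) + S j * ℓopt j
        = ((w j) ^ α * (ℓopt j) ^ (1 - α)) * α := by rw [hkey j]; ring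
      _ ≤ ((w j) ^ α * (ℓopt j) ^ (1 - α)) * (t ^ (1 - α) + (α - 1) * t) :=
          mul_le_mul_of_nonneg_left hky hCnn
      _ = (w j) ^ α * (ℓ j) ^ (1 - α) + S j * ℓ j := by rw [hrpow, h2]; ring
  · rw [hval]
    nlinarith [mul_nonneg hα0.le hOPTnonneg]
end
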